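/- arXiv:1901.05889 — 6 statements merged into one kernel-verified Lean document; each statement's English description precedes it below -/
import Mathlib

section
/- Let $m \geq 2$ be a positive integer and $\omega$ a primitive $m$-th root of unity. Define $f(a,k,z,q) = \sum_{n=1}^{\infty}\left(\frac{k q^n}{1-kq^n} + \frac{a q^n/z}{1-a q^n/z} - \frac{a q^n}{1-aq^n} - \frac{k q^n/z}{1-k q^n/z}\right)$. Then $\sum_{j=0}^{m-1} f(a\omega^j, k\omega^j, z, q) = m\, f(a^m, k^m, z^m, q^m)$. -/
open Finset Filter

lemma rootsum (m : ℕ) (hm : 1 ≤ m) (ω : ℂ) (hω : IsPrimitiveRoot ω m)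
    (c : ℂ) (hc : ∀ j < m, c * ω ^ j ≠ 1) (hcm : c ^ m ≠ 1) :
    ∑ j ∈ Finset.range m, c * ω ^ j / (1 - c * ω ^ j) = m * c ^ m / (1 - c ^ m) := by
  have h1m : (1:ℂ) - c ^ m ≠ 0 := sub_ne_zero.mpr (Ne.symm hcm)
  have hS : ∑ j ∈ range m, 1 / (1 - c * ω ^ j) = m / (1 - c ^ m) := by
    rw [eq_div_iff h1m, Finset.sum_mul]
    have key : ∀ j ∈ range m, 1 / (1 - c * ω ^ j) * (1 - c ^ m)
        = ∑ r ∈ range m, (c * ω ^ j) ^ r := by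
      intro j hj
      have hne : c * ω ^ j ≠ 1 := hc j (mem_range.mp hj)
      have h1 : 1 - c * ω ^ j ≠ 0 := sub_ne_zero.mpr (Ne.symm hne)
      have hpow : (c * ω ^ j) ^ m = c ^ m := by
        rw [mul_pow, ← pow_mul, mul_comm j m, pow_mul, hω.pow_eq_one, one_pow, mul_one]
      rw [geom_sum_eq hne, hpow,
        show (c ^ m - 1) / (c * ω ^ j - 1) = (1 - c ^ m) / (1 - c * ω ^ j) by
          rw [← neg_sub 1 (c ^ m), ← neg_sub 1 (c * ω ^ j), neg_div_neg_eq],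
        one_div, inv_mul_eq_div]
    rw [Finset.sum_congr rfl key, Finset.sum_comm]
    have inner : ∀ r ∈ range m, ∑ j ∈ range m, (c * ω ^ j) ^ r
        = if r = 0 then (m : ℂ) else 0 := by
      intro r hr
      rcases eq_or_ne r 0 with h0 | h0
      · simp [h0]
      · simp only [h0, if_false]
        have hne : ω ^ r ≠ 1 :=
          hω.pow_ne_one_of_pos_of_lt h0 (mem_range.mp hr)
        have : ∀ j, (c * ω ^ j) ^ r = c ^ r * (ω ^ r) ^ j := by
          intro j; rw [mul_pow, ← pow_mul, mul_comm j r, pow_mul]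
        simp only [this, ← Finset.mul_sum]
        rw [geom_sum_eq hne]
        have : (ω ^ r) ^ m = 1 := by rw [← pow_mul, mul_comm r m, pow_mul, hω.pow_eq_one, one_pow]
        rw [this]
        simp
    rw [Finset.sum_congr rfl inner, Finset.sum_ite_eq' (range m) 0 (fun _ => (m : ℂ))]
    have h0 : (0:ℕ) ∈ range m := mem_range.mpr (by omega)
    simp [h0]
  have key2 : ∀ j ∈ range m, c * ω ^ j / (1 - c * ω ^ j) = 1 / (1 - c * ω ^ j) - 1 := by
    intro j hj
    have h1 : 1 - c * ω ^ j ≠ 0 := sub_ne_zero.mpr (Ne.symm (hc j (mem_range.mp hj)))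
    field_simp
    ring
  rw [Finset.sum_congr rfl key2, Finset.sum_sub_distrib, hS, Finset.sum_const, card_range]
  field_simp
  ring

lemma lamSummable (c q : ℂ) (hq : ‖q‖ < 1) :
    Summable (fun n : ℕ => c * q ^ (n + 1) / (1 - c * q ^ (n + 1))) := by
  have hq' : ‖q‖ < 1 := hq
  have htend : Tendsto (fun n : ℕ => c * q ^ (n + 1)) atTop (nhds 0) := by
    have h1 := tendsto_pow_atTop_nhds_zero_of_norm_lt_one hq'
    have h2 : Tendsto (fun n : ℕ => q ^ (n + 1)) atTop (nhds 0) :=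
      h1.comp (tendsto_add_atTop_nat 1)
    simpa using h2.const_mul c
  have hev : ∀ᶠ n : ℕ in atTop, ‖c * q ^ (n + 1)‖ ≤ 1 / 2 := by
    have := (htend.norm).eventually_le_const (by norm_num : ‖(0:ℂ)‖ < 1 / 2)
    simpa using this
  apply Summable.of_norm_bounded_eventually
    (g := fun n : ℕ => 2 * ‖c‖ * ‖q‖ * ‖q‖ ^ n)
  · exact (summable_geometric_of_lt_one (norm_nonneg q) hq').mul_left _
  · rw [Nat.cofinite_eq_atTop]
    filter_upwards [hev] with n hn
    have hx : ‖c * q ^ (n + 1)‖ ≤ 1 / 2 := hn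
    have hden : (1:ℝ) / 2 ≤ ‖1 - c * q ^ (n + 1)‖ := by
      have := norm_sub_norm_le (1 : ℂ) (c * q ^ (n + 1))
      simp only [norm_one] at this
      linarith
    have hdpos : (0:ℝ) < ‖1 - c * q ^ (n + 1)‖ := by linarith
    rw [norm_div]
    calc ‖c * q ^ (n + 1)‖ / ‖1 - c * q ^ (n + 1)‖
        ≤ ‖c * q ^ (n + 1)‖ / (1 / 2) := by
          apply div_le_div_of_nonneg_left (norm_nonneg _) (by norm_num) hden
      _ = 2 * ‖c * q ^ (n + 1)‖ := by ring
      _ = 2 * ‖c‖ * ‖q‖ * ‖q‖ ^ n := by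
          rw [norm_mul, norm_pow, pow_succ]; ring


noncomputable def lambertF (a k z q : ℂ) : ℂ :=
  ∑' n : ℕ, (k * q ^ (n + 1) / (1 - k * q ^ (n + 1))
    + a * q ^ (n + 1) / z / (1 - a * q ^ (n + 1) / z)
    - a * q ^ (n + 1) / (1 - a * q ^ (n + 1))
    - k * q ^ (n + 1) / z / (1 - k * q ^ (n + 1) / z))

theorem stmt_3 (m : ℕ) (hm : 2 ≤ m) (ω : ℂ) (hω : IsPrimitiveRoot ω m)
    (a k z q : ℂ) (hq : ‖q‖ < 1) (hz : z ≠ 0)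
    (hden : ∀ j : ℕ, j < m → ∀ n : ℕ,
      a * ω ^ j * q ^ (n + 1) ≠ 1 ∧ k * ω ^ j * q ^ (n + 1) ≠ 1
      ∧ a * ω ^ j * q ^ (n + 1) / z ≠ 1 ∧ k * ω ^ j * q ^ (n + 1) / z ≠ 1)
    (hdenm : ∀ n : ℕ, a ^ m * (q ^ m) ^ (n + 1) ≠ 1
      ∧ k ^ m * (q ^ m) ^ (n + 1) ≠ 1
      ∧ a ^ m * (q ^ m) ^ (n + 1) / z ^ m ≠ 1
      ∧ k ^ m * (q ^ m) ^ (n + 1) / z ^ m ≠ 1) :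
    ∑ j ∈ Finset.range m, lambertF (a * ω ^ j) (k * ω ^ j) z q
      = m * lambertF (a ^ m) (k ^ m) (z ^ m) (q ^ m) := by
  have hsummand : ∀ a' k' : ℂ, Summable (fun n : ℕ =>
      k' * q ^ (n + 1) / (1 - k' * q ^ (n + 1))
      + a' * q ^ (n + 1) / z / (1 - a' * q ^ (n + 1) / z)
      - a' * q ^ (n + 1) / (1 - a' * q ^ (n + 1))
      - k' * q ^ (n + 1) / z / (1 - k' * q ^ (n + 1) / z)) := by
    intro a' k'
    have h1 := lamSummable k' q hq
    have h2 := lamSummable (a' / z) q hq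
    have h3 := lamSummable a' q hq
    have h4 := lamSummable (k' / z) q hq
    simp only [div_mul_eq_mul_div] at h2 h4
    exact ((h1.add h2).sub h3).sub h4
  unfold lambertF
  rw [← tsum_mul_left, ← Summable.tsum_finsetSum (fun j _ => hsummand (a * ω ^ j) (k * ω ^ j))]
  apply tsum_congr
  intro n
  have hm1 : 1 ≤ m := by omega
  have e : ∀ j ∈ range m,
      (k * ω ^ j) * q ^ (n + 1) / (1 - (k * ω ^ j) * q ^ (n + 1))
      + (a * ω ^ j) * q ^ (n + 1) / z / (1 - (a * ω ^ j) * q ^ (n + 1) / z)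
      - (a * ω ^ j) * q ^ (n + 1) / (1 - (a * ω ^ j) * q ^ (n + 1))
      - (k * ω ^ j) * q ^ (n + 1) / z / (1 - (k * ω ^ j) * q ^ (n + 1) / z)
      = (k * q ^ (n + 1)) * ω ^ j / (1 - (k * q ^ (n + 1)) * ω ^ j)
      + (a * q ^ (n + 1) / z) * ω ^ j / (1 - (a * q ^ (n + 1) / z) * ω ^ j)
      - (a * q ^ (n + 1)) * ω ^ j / (1 - (a * q ^ (n + 1)) * ω ^ j)
      - (k * q ^ (n + 1) / z) * ω ^ j / (1 - (k * q ^ (n + 1) / z) * ω ^ j) := by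
    intro j _
    ring_nf
  rw [Finset.sum_congr rfl e]
  have p1 : (k * q ^ (n + 1)) ^ m = k ^ m * (q ^ m) ^ (n + 1) := by
    rw [mul_pow, pow_right_comm]
  have p2 : (a * q ^ (n + 1) / z) ^ m = a ^ m * (q ^ m) ^ (n + 1) / z ^ m := by
    rw [div_pow, mul_pow, pow_right_comm]
  have p3 : (a * q ^ (n + 1)) ^ m = a ^ m * (q ^ m) ^ (n + 1) := by
    rw [mul_pow, pow_right_comm]
  have p4 : (k * q ^ (n + 1) / z) ^ m = k ^ m * (q ^ m) ^ (n + 1) / z ^ m := by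
    rw [div_pow, mul_pow, pow_right_comm]
  have hc1 : ∀ j < m, (k * q ^ (n + 1)) * ω ^ j ≠ 1 := by
    intro j hj
    have h := (hden j hj n).2.1
    rw [show (k * q ^ (n + 1)) * ω ^ j = k * ω ^ j * q ^ (n + 1) by ring]
    exact h
  have hc2 : ∀ j < m, (a * q ^ (n + 1) / z) * ω ^ j ≠ 1 := by
    intro j hj
    have h := (hden j hj n).2.2.1
    rw [show (a * q ^ (n + 1) / z) * ω ^ j = a * ω ^ j * q ^ (n + 1) / z by ring]
    exact h
  have hc3 : ∀ j < m, (a * q ^ (n + 1)) * ω ^ j ≠ 1 := by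
    intro j hj
    have h := (hden j hj n).1
    rw [show (a * q ^ (n + 1)) * ω ^ j = a * ω ^ j * q ^ (n + 1) by ring]
    exact h
  have hc4 : ∀ j < m, (k * q ^ (n + 1) / z) * ω ^ j ≠ 1 := by
    intro j hj
    have h := (hden j hj n).2.2.2
    rw [show (k * q ^ (n + 1) / z) * ω ^ j = k * ω ^ j * q ^ (n + 1) / z by ring]
    exact h
  rw [Finset.sum_sub_distrib, Finset.sum_sub_distrib, Finset.sum_add_distrib,
    rootsum m hm1 ω hω (k * q ^ (n + 1)) hc1 (by rw [p1]; exact (hdenm n).2.1),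
    rootsum m hm1 ω hω (a * q ^ (n + 1) / z) hc2 (by rw [p2]; exact (hdenm n).2.2.1),
    rootsum m hm1 ω hω (a * q ^ (n + 1)) hc3 (by rw [p3]; exact (hdenm n).1),
    rootsum m hm1 ω hω (k * q ^ (n + 1) / z) hc4 (by rw [p4]; exact (hdenm n).2.2.2),
    p1, p2, p3, p4]
  ring
end

section
/- For $|q|<1$ and $|z|<1$, $\sum_{n=0}^{\infty} \frac{z^n}{(q;q)_n} = \frac{1}{(z;q)_{\infty}}$, where $(q;q)_n = \prod_{j=1}^n(1-q^j)$ and $(z;q)_\infty = \prod_{j=0}^\infty (1-zq^j)$. -/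
open Filter Finset Complex Topology

private lemma aux_lb (q : ℂ) (hq : ‖q‖ < 1) :
    ∃ C > 0, ∀ n : ℕ, C ≤ ‖∏ j ∈ Finset.range n, (1 - q ^ (j + 1))‖ := by
  set x : ℕ → ℝ := fun j => ‖q‖ ^ (j + 1) with hx
  have hq0 : 0 ≤ ‖q‖ := norm_nonneg q
  have hxle : ∀ j, x j ≤ ‖q‖ := fun j => by
    calc x j ≤ ‖q‖ ^ 1 := pow_le_pow_of_le_one hq0 hq.le (by omega)
    _ = ‖q‖ := pow_one _
  have hxlt : ∀ j, x j < 1 := fun j => lt_of_le_of_lt (hxle j) hq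
  have hxnn : ∀ j, 0 ≤ x j := fun j => pow_nonneg hq0 _
  have hlog_nonpos : ∀ j, Real.log (1 - x j) ≤ 0 :=
    fun j => Real.log_nonpos (by linarith [hxlt j]) (by linarith [hxnn j])
  have hsumlog : Summable fun j => Real.log (1 - x j) := by
    rw [← summable_neg_iff]
    refine Summable.of_nonneg_of_le (f := fun j => x j * (1 - ‖q‖)⁻¹)
      (fun j => by linarith [hlog_nonpos j]) ?_ ?_
    · intro j
      have h1 : (0:ℝ) < 1 - x j := by linarith [hxlt j]
      rw [show -Real.log (1 - x j) = Real.log (1 - x j)⁻¹ from (Real.log_inv _).symm]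
      have h3 : Real.log (1 - x j)⁻¹ ≤ (1 - x j)⁻¹ - 1 :=
        Real.log_le_sub_one_of_pos (by positivity)
      have h4 : (1 - x j)⁻¹ - 1 = x j / (1 - x j) := by field_simp; ring
      have h5 : x j / (1 - x j) ≤ x j * (1 - ‖q‖)⁻¹ := by
        rw [div_eq_mul_inv]
        refine mul_le_mul_of_nonneg_left ?_ (hxnn j)
        exact inv_anti₀ (by linarith) (by linarith [hxle j])
      linarith
    · have : Summable fun j : ℕ => ‖q‖ ^ j := summable_geometric_of_lt_one hq0 hq
      have h2 := (this.mul_left ‖q‖).mul_right (1 - ‖q‖)⁻¹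
      refine h2.congr fun j => ?_
      simp [hx, pow_succ, mul_comm]
  refine ⟨Real.exp (∑' j, Real.log (1 - x j)), Real.exp_pos _, fun n => ?_⟩
  have key1 : ∑' j, Real.log (1 - x j) ≤ ∑ j ∈ Finset.range n, Real.log (1 - x j) := by
    rw [← Summable.sum_add_tsum_nat_add n hsumlog]
    have : ∑' j, Real.log (1 - x (j + n)) ≤ 0 := tsum_nonpos fun j => hlog_nonpos _
    linarith
  have key2 : Real.exp (∑ j ∈ Finset.range n, Real.log (1 - x j))
      = ∏ j ∈ Finset.range n, (1 - x j) := by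
    rw [Real.exp_sum]
    exact Finset.prod_congr rfl fun j _ => Real.exp_log (by linarith [hxlt j])
  calc Real.exp (∑' j, Real.log (1 - x j)) ≤ ∏ j ∈ Finset.range n, (1 - x j) := by
        rw [← key2]; exact Real.exp_le_exp.2 key1
    _ ≤ ‖∏ j ∈ Finset.range n, (1 - q ^ (j + 1))‖ := by
        rw [norm_prod]
        refine Finset.prod_le_prod (fun j _ => by linarith [hxlt j]) fun j _ => ?_
        calc (1 : ℝ) - x j = ‖(1:ℂ)‖ - ‖q ^ (j+1)‖ := by simp [hx, norm_pow]
          _ ≤ ‖1 - q ^ (j + 1)‖ := norm_sub_norm_le _ _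

theorem stmt_4 (q z : ℂ) (hq : ‖q‖ < 1) (hz : ‖z‖ < 1) :
    ∑' n : ℕ, z ^ n / ∏ j ∈ Finset.range n, (1 - q ^ (j + 1))
      = (∏' j : ℕ, (1 - z * q ^ j))⁻¹ := by
  have hq0 : 0 ≤ ‖q‖ := norm_nonneg q
  have hz0 : 0 ≤ ‖z‖ := norm_nonneg z
  obtain ⟨C, hC, hCle⟩ := aux_lb q hq
  set P : ℕ → ℂ := fun n => ∏ j ∈ Finset.range n, (1 - q ^ (j + 1)) with hP
  have hne : ∀ n : ℕ, (1 : ℂ) - q ^ (n + 1) ≠ 0 := by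
    intro n h
    rw [sub_eq_zero] at h
    have h1 : ‖q ^ (n+1)‖ < 1 := by
      rw [norm_pow]; exact pow_lt_one₀ hq0 hq (by omega)
    rw [← h] at h1; simp at h1
  -- summability of the series
  have hsum : ∀ w : ℂ, ‖w‖ < 1 → Summable (fun n => w ^ n / P n) := by
    intro w hw
    apply Summable.of_norm
    refine Summable.of_nonneg_of_le (f := fun n => ‖w‖ ^ n * C⁻¹)
      (fun n => norm_nonneg _) ?_ ?_
    · intro n
      rw [norm_div, norm_pow, div_eq_mul_inv]
      exact mul_le_mul_of_nonneg_left (inv_anti₀ hC (hCle n)) (by positivity)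
    · exact (summable_geometric_of_lt_one (norm_nonneg w) hw).mul_right _
  set f : ℂ → ℂ := fun w => ∑' n, w ^ n / P n with hf
  -- functional equation
  have hfe : ∀ w : ℂ, ‖w‖ < 1 → f (q * w) = (1 - w) * f w := by
    intro w hw
    have hqw : ‖q * w‖ < 1 := by
      rw [norm_mul]
      calc ‖q‖ * ‖w‖ ≤ 1 * ‖w‖ := mul_le_mul_of_nonneg_right hq.le (norm_nonneg w)
        _ = ‖w‖ := one_mul _
        _ < 1 := hw
    have S := hsum w hw
    have S' := hsum (q * w) hqw
    have hg : Summable (fun n : ℕ => (w ^ n - (q * w) ^ n) / P n) :=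
      (S.sub S').congr fun n => (sub_div _ _ _).symm
    have hstep : ∀ n : ℕ, (w ^ (n+1) - (q * w) ^ (n+1)) / P (n+1) = w * (w ^ n / P n) := by
      intro n
      have hPs : P (n+1) = P n * (1 - q ^ (n+1)) := Finset.prod_range_succ _ _
      have h2 : w ^ (n+1) - (q * w) ^ (n+1) = w ^ (n+1) * (1 - q ^ (n+1)) := by ring
      rw [hPs, h2, mul_div_mul_right _ _ (hne n), pow_succ, mul_comm (w ^ n) w,
        mul_div_assoc]
    have key : f w - f (q * w) = w * f w := by
      calc f w - f (q * w) = ∑' n, (w ^ n - (q * w) ^ n) / P n := by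
            rw [hf]
            simp only
            rw [← Summable.tsum_sub S S']
            exact tsum_congr fun n => (sub_div _ _ _).symm
        _ = (w ^ 0 - (q * w) ^ 0) / P 0 + ∑' n, (w ^ (n+1) - (q * w) ^ (n+1)) / P (n+1) :=
            Summable.tsum_eq_zero_add hg
        _ = ∑' n, w * (w ^ n / P n) := by
            rw [tsum_congr hstep]; simp
        _ = w * f w := tsum_mul_left
    linear_combination -key
  -- iteration
  have hiter : ∀ N : ℕ, f (q ^ N * z) = (∏ j ∈ Finset.range N, (1 - z * q ^ j)) * f z := by
    intro N
    induction N with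
    | zero => simp
    | succ N ih =>
      have hN : ‖q ^ N * z‖ < 1 := by
        rw [norm_mul, norm_pow]
        calc ‖q‖ ^ N * ‖z‖ ≤ 1 * ‖z‖ :=
              mul_le_mul_of_nonneg_right (pow_le_one₀ hq0 hq.le) hz0
          _ = ‖z‖ := one_mul _
          _ < 1 := hz
      have h1 := hfe (q ^ N * z) hN
      rw [show q * (q ^ N * z) = q ^ (N + 1) * z by ring] at h1
      rw [h1, ih, Finset.prod_range_succ]
      ring
  -- nonvanishing of product factors
  have hzne : ∀ j : ℕ, (1 : ℂ) - z * q ^ j ≠ 0 := by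
    intro j h
    rw [sub_eq_zero] at h
    have h1 : ‖z * q ^ j‖ < 1 := by
      rw [norm_mul, norm_pow]
      calc ‖z‖ * ‖q‖ ^ j ≤ ‖z‖ * 1 :=
            mul_le_mul_of_nonneg_left (pow_le_one₀ hq0 hq.le) hz0
        _ = ‖z‖ := mul_one _
        _ < 1 := hz
    rw [← h] at h1; simp at h1
  -- summability of logs, hence multipliability
  have hlogsum : Summable fun j : ℕ => Complex.log (1 - z * q ^ j) := by
    obtain ⟨k, hk⟩ : ∃ k : ℕ, ‖q‖ ^ k ≤ 1/2 := by
      have := (tendsto_pow_atTop_nhds_zero_of_lt_one hq0 hq).eventually_le_const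
        (show (0:ℝ) < 1/2 by norm_num)
      exact this.exists
    rw [← summable_nat_add_iff k]
    apply Summable.of_norm
    refine Summable.of_nonneg_of_le (f := fun n => 3/2 * ‖q‖ ^ n)
      (fun n => norm_nonneg _) ?_ ?_
    · intro n
      have hb0 : ‖-(z * q ^ (n + k))‖ = ‖z‖ * (‖q‖ ^ n * ‖q‖ ^ k) := by
        rw [norm_neg, norm_mul, norm_pow, pow_add]
      have hqk1 : ‖q‖ ^ k ≤ 1 := le_trans hk (by norm_num)
      have hqn1 : ‖q‖ ^ n ≤ 1 := pow_le_one₀ hq0 hq.le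
      have hb : ‖-(z * q ^ (n + k))‖ ≤ 1/2 := by
        rw [hb0]
        calc ‖z‖ * (‖q‖ ^ n * ‖q‖ ^ k) ≤ 1 * (1 * (1/2)) := by
              apply mul_le_mul hz.le _ (by positivity) zero_le_one
              apply mul_le_mul hqn1 hk (by positivity) zero_le_one
          _ = 1/2 := by norm_num
      have hlb := Complex.norm_log_one_add_half_le_self hb
      rw [show (1:ℂ) + -(z * q ^ (n + k)) = 1 - z * q ^ (n + k) by ring] at hlb
      refine hlb.trans ?_
      rw [hb0]
      have : ‖z‖ * (‖q‖ ^ n * ‖q‖ ^ k) ≤ ‖q‖ ^ n := by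
        calc ‖z‖ * (‖q‖ ^ n * ‖q‖ ^ k) ≤ 1 * (‖q‖ ^ n * 1) := by
              apply mul_le_mul hz.le _ (by positivity) zero_le_one
              exact mul_le_mul_of_nonneg_left hqk1 (by positivity)
          _ = ‖q‖ ^ n := by ring
      nlinarith [pow_nonneg hq0 n]
    · exact (summable_geometric_of_lt_one hq0 hq).mul_left _
  have hmult : Multipliable fun j : ℕ => (1 - z * q ^ j) :=
    Complex.multipliable_of_summable_log hlogsum
  have hprod : Tendsto (fun N => ∏ j ∈ Finset.range N, (1 - z * q ^ j)) atTop
      (𝓝 (∏' j : ℕ, (1 - z * q ^ j))) := HasProd.tendsto_prod_nat hmult.hasProd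
  -- f (q^N z) → 1
  have hdiff : ∀ w : ℂ, ‖w‖ ≤ ‖z‖ → ‖f w - 1‖ ≤ ‖w‖ * (C⁻¹ * (1 - ‖z‖)⁻¹) := by
    intro w hw
    have hw1 : ‖w‖ < 1 := lt_of_le_of_lt hw hz
    have S := hsum w hw1
    have hfw : f w - 1 = ∑' n, w ^ (n+1) / P (n+1) := by
      rw [hf]
      simp only
      rw [Summable.tsum_eq_zero_add S]
      simp [hP]
    rw [hfw]
    have hgeo : HasSum (fun n : ℕ => (‖w‖ * C⁻¹) * ‖w‖ ^ n)
        ((‖w‖ * C⁻¹) * (1 - ‖w‖)⁻¹) :=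
      (hasSum_geometric_of_lt_one (norm_nonneg w) hw1).mul_left _
    have hbd : ∀ n : ℕ, ‖w ^ (n+1) / P (n+1)‖ ≤ (‖w‖ * C⁻¹) * ‖w‖ ^ n := by
      intro n
      rw [norm_div, norm_pow, div_eq_mul_inv]
      calc ‖w‖ ^ (n+1) * ‖P (n+1)‖⁻¹ ≤ ‖w‖ ^ (n+1) * C⁻¹ :=
            mul_le_mul_of_nonneg_left (inv_anti₀ hC (hCle _)) (by positivity)
        _ = (‖w‖ * C⁻¹) * ‖w‖ ^ n := by ring
    calc ‖∑' n, w ^ (n+1) / P (n+1)‖ ≤ (‖w‖ * C⁻¹) * (1 - ‖w‖)⁻¹ :=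
          tsum_of_norm_bounded hgeo hbd
      _ ≤ ‖w‖ * (C⁻¹ * (1 - ‖z‖)⁻¹) := by
          rw [mul_assoc]
          refine mul_le_mul_of_nonneg_left ?_ (norm_nonneg w)
          refine mul_le_mul_of_nonneg_left ?_ (by positivity)
          exact inv_anti₀ (by linarith) (by linarith)
  have hft : Tendsto (fun N => f (q ^ N * z)) atTop (𝓝 1) := by
    rw [tendsto_iff_norm_sub_tendsto_zero]
    refine squeeze_zero (fun N => norm_nonneg _)
      (g := fun N => ‖q‖ ^ N * (‖z‖ * (C⁻¹ * (1 - ‖z‖)⁻¹))) (fun N => ?_) ?_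
    · have hle : ‖q ^ N * z‖ ≤ ‖z‖ := by
        rw [norm_mul, norm_pow]
        calc ‖q‖ ^ N * ‖z‖ ≤ 1 * ‖z‖ :=
              mul_le_mul_of_nonneg_right (pow_le_one₀ hq0 hq.le) hz0
          _ = ‖z‖ := one_mul _
      refine (hdiff _ hle).trans ?_
      rw [norm_mul, norm_pow]
      ring_nf
      exact le_refl _
    · have h0 := (tendsto_pow_atTop_nhds_zero_of_lt_one hq0 hq).mul_const
        (‖z‖ * (C⁻¹ * (1 - ‖z‖)⁻¹))
      simpa using h0
  -- conclude
  have hlim1 : Tendsto (fun N => f (q ^ N * z)) atTop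
      (𝓝 ((∏' j : ℕ, (1 - z * q ^ j)) * f z)) := by
    refine (hprod.mul_const (f z)).congr fun N => (hiter N).symm
  have hone : (∏' j : ℕ, (1 - z * q ^ j)) * f z = 1 := tendsto_nhds_unique hlim1 hft
  show f z = (∏' j : ℕ, (1 - z * q ^ j))⁻¹
  exact eq_inv_of_mul_eq_one_right hone
end

section
/- For $|q|<1$ and any complex $z$, $\sum_{n=0}^{\infty} \frac{q^{n(n-1)/2}(-z)^n}{(q;q)_n} = (z;q)_{\infty}$, where $(q;q)_n = \prod_{j=1}^n(1-q^j)$ and $(z;q)_\infty = \prod_{j=0}^\infty (1-zq^j)$. -/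
open Filter Finset Topology

noncomputable def gg (q z : ℂ) (N n : ℕ) : ℂ :=
  q ^ (n * (n - 1) / 2) * (-z) ^ n * (∏ j ∈ Finset.range n, (1 - q ^ (N - j)))
    / ∏ j ∈ Finset.range n, (1 - q ^ (j + 1))

lemma gg_zero_aux (q z : ℂ) (N n : ℕ) (h : N < n) : gg q z N n = 0 := by
  unfold gg
  rw [Finset.prod_eq_zero (Finset.mem_range.mpr h) (i := N) (by simp)]
  simp

lemma gg_key (q z : ℂ) (hD : ∀ m, (∏ j ∈ Finset.range m, (1 - q ^ (j + 1))) ≠ 0)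
    (N n : ℕ) (hn : n ≤ N) :
    gg q z (N + 1) (n + 1) = gg q z N (n + 1) - z * q ^ N * gg q z N n := by
  obtain ⟨k, rfl⟩ : ∃ k, N = n + k := ⟨N - n, (Nat.add_sub_cancel' hn).symm⟩
  unfold gg
  have hT : (n + 1) * ((n + 1) - 1) / 2 = n * (n - 1) / 2 + n := by
    have h1 : (n + 1) * ((n + 1) - 1) / 2 = (n + 1).choose 2 := by
      rw [Nat.choose_two_right]
    have h2 : n * (n - 1) / 2 = n.choose 2 := (Nat.choose_two_right n).symm
    rw [h1, h2, Nat.choose_succ_succ, Nat.choose_one_right, Nat.add_comm]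
  have pa : ∏ j ∈ Finset.range (n + 1), (1 - q ^ (n + k + 1 - j))
      = (1 - q ^ (n + k + 1)) * ∏ j ∈ Finset.range n, (1 - q ^ (n + k - j)) := by
    rw [Finset.prod_range_succ']
    have h : ∀ j, n + k + 1 - (j + 1) = n + k - j := fun j => by omega
    simp only [h, Nat.sub_zero]
    ring
  have pb : ∏ j ∈ Finset.range (n + 1), (1 - q ^ (n + k - j))
      = (∏ j ∈ Finset.range n, (1 - q ^ (n + k - j))) * (1 - q ^ k) := by
    rw [Finset.prod_range_succ]
    congr 3
    omega
  have pc : ∏ j ∈ Finset.range (n + 1), (1 - q ^ (j + 1))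
      = (∏ j ∈ Finset.range n, (1 - q ^ (j + 1))) * (1 - q ^ (n + 1)) :=
    Finset.prod_range_succ _ _
  have hDn := hD n
  have hDq : (1 : ℂ) - q ^ (n + 1) ≠ 0 := by
    have h := hD (n + 1)
    rw [pc] at h
    exact right_ne_zero_of_mul h
  rw [hT, pa, pb, pc]
  field_simp
  ring

lemma finite_id (q z : ℂ) (hD : ∀ m, (∏ j ∈ Finset.range m, (1 - q ^ (j + 1))) ≠ 0) (N : ℕ) :
    ∏ j ∈ Finset.range N, (1 - z * q ^ j) = ∑ n ∈ Finset.range (N + 1), gg q z N n := by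
  induction N with
  | zero => simp [gg]
  | succ N ih =>
    have g0 : ∀ M, gg q z M 0 = 1 := fun M => by simp [gg]
    have e1 : ∑ n ∈ Finset.range (N + 2), gg q z (N + 1) n
        = ∑ i ∈ Finset.range (N + 1), gg q z (N + 1) (i + 1) + gg q z (N + 1) 0 :=
      Finset.sum_range_succ' _ _
    have e2 : ∑ i ∈ Finset.range (N + 1), gg q z (N + 1) (i + 1)
        = ∑ i ∈ Finset.range (N + 1), (gg q z N (i + 1) - z * q ^ N * gg q z N i) :=
      Finset.sum_congr rfl fun i hi =>
        gg_key q z hD N i (Nat.lt_succ_iff.mp (Finset.mem_range.mp hi))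
    have e3 : ∑ n ∈ Finset.range (N + 2), gg q z N n
        = ∑ i ∈ Finset.range (N + 1), gg q z N (i + 1) + gg q z N 0 :=
      Finset.sum_range_succ' _ _
    have e4 : ∑ n ∈ Finset.range (N + 2), gg q z N n
        = ∑ n ∈ Finset.range (N + 1), gg q z N n + gg q z N (N + 1) :=
      Finset.sum_range_succ _ _
    have e5 : gg q z N (N + 1) = 0 := gg_zero_aux q z N (N + 1) (Nat.lt_succ_self N)
    rw [Finset.prod_range_succ, ih]
    rw [e1, e2, Finset.sum_sub_distrib, ← Finset.mul_sum, g0]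
    have e6 : ∑ i ∈ Finset.range (N + 1), gg q z N (i + 1)
        = (∑ n ∈ Finset.range (N + 1), gg q z N n) - 1 := by
      have h := e3.symm.trans e4
      rw [e5, g0] at h
      linear_combination h
    rw [e6]
    ring

lemma D_ne (q : ℂ) (hq : ‖q‖ < 1) (m : ℕ) :
    (∏ j ∈ Finset.range m, (1 - q ^ (j + 1))) ≠ 0 := by
  refine Finset.prod_ne_zero_iff.mpr fun j _ => sub_ne_zero.mpr fun h => ?_
  have h1 : ‖q ^ (j + 1)‖ < 1 := by
    rw [norm_pow]
    exact pow_lt_one₀ (norm_nonneg q) hq (Nat.succ_ne_zero j)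
  rw [← h] at h1
  simp at h1

lemma gg_tendsto (q z : ℂ) (hq : ‖q‖ < 1) (n : ℕ) :
    Filter.Tendsto (fun N => gg q z N n) Filter.atTop
      (𝓝 (q ^ (n * (n - 1) / 2) * (-z) ^ n / ∏ j ∈ Finset.range n, (1 - q ^ (j + 1)))) := by
  have hP : Filter.Tendsto (fun N => ∏ j ∈ Finset.range n, (1 - q ^ (N - j))) Filter.atTop
      (𝓝 1) := by
    have h1 : Filter.Tendsto (fun N => ∏ j ∈ Finset.range n, (1 - q ^ (N - j))) Filter.atTop
        (𝓝 (∏ _j ∈ Finset.range n, (1 : ℂ))) := by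
      apply tendsto_finset_prod
      intro j _
      have hq0 : Filter.Tendsto (fun N : ℕ => q ^ (N - j)) Filter.atTop (𝓝 0) := by
        rw [tendsto_zero_iff_norm_tendsto_zero]
        simp only [norm_pow]
        have h2 : Filter.Tendsto (fun m : ℕ => ‖q‖ ^ m) Filter.atTop (𝓝 0) :=
          tendsto_pow_atTop_nhds_zero_of_lt_one (norm_nonneg q)
            hq
        exact h2.comp (tendsto_sub_atTop_nat j)
      have := (tendsto_const_nhds (x := (1 : ℂ)) (f := Filter.atTop (α := ℕ))).sub hq0
      simpa using this
    simpa using h1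
  have h3 := (hP.const_mul (q ^ (n * (n - 1) / 2) * (-z) ^ n)).div_const
    (∏ j ∈ Finset.range n, (1 - q ^ (j + 1)))
  simpa [gg, mul_one] using h3

lemma gg_bound (q z : ℂ) (hq : ‖q‖ < 1) (N n : ℕ) :
    ‖gg q z N n‖ ≤ 2 ^ n * ‖z‖ ^ n * ‖q‖ ^ (n * (n - 1) / 2)
      / ∏ j ∈ Finset.range n, (1 - ‖q‖ ^ (j + 1)) := by
  have hs : ‖q‖ < 1 := hq
  have hs0 : (0 : ℝ) ≤ ‖q‖ := norm_nonneg q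
  have hfac : ∀ j : ℕ, (0 : ℝ) < 1 - ‖q‖ ^ (j + 1) := fun j =>
    sub_pos.mpr (pow_lt_one₀ hs0 hs (Nat.succ_ne_zero j))
  have hd_pos : (0 : ℝ) < ∏ j ∈ Finset.range n, (1 - ‖q‖ ^ (j + 1)) :=
    Finset.prod_pos fun j _ => hfac j
  have hPle : ‖∏ j ∈ Finset.range n, (1 - q ^ (N - j))‖ ≤ 2 ^ n := by
    rw [norm_prod]
    calc ∏ j ∈ Finset.range n, ‖1 - q ^ (N - j)‖
        ≤ ∏ _j ∈ Finset.range n, (2 : ℝ) := by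
          refine Finset.prod_le_prod (fun j _ => norm_nonneg _) (fun j _ => ?_)
          calc ‖1 - q ^ (N - j)‖ ≤ ‖(1 : ℂ)‖ + ‖q ^ (N - j)‖ := norm_sub_le _ _
            _ ≤ 1 + 1 := by
                rw [norm_one, norm_pow]
                have := pow_le_one₀ hs0 hs.le (n := N - j)
                linarith
            _ = 2 := by norm_num
      _ = 2 ^ n := by simp
  have hdb : ∏ j ∈ Finset.range n, (1 - ‖q‖ ^ (j + 1))
      ≤ ‖∏ j ∈ Finset.range n, (1 - q ^ (j + 1))‖ := by
    rw [norm_prod]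
    refine Finset.prod_le_prod (fun j _ => (hfac j).le) (fun j _ => ?_)
    have h := norm_sub_norm_le (1 : ℂ) (q ^ (j + 1))
    rw [norm_one, norm_pow] at h
    linarith
  unfold gg
  rw [norm_div, norm_mul, norm_mul, norm_pow, norm_pow, norm_neg]
  refine div_le_div₀ (by positivity) ?_ hd_pos hdb
  calc ‖q‖ ^ (n * (n - 1) / 2) * ‖z‖ ^ n * ‖∏ j ∈ Finset.range n, (1 - q ^ (N - j))‖
      ≤ ‖q‖ ^ (n * (n - 1) / 2) * ‖z‖ ^ n * 2 ^ n := by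
        exact mul_le_mul_of_nonneg_left hPle (by positivity)
    _ = 2 ^ n * ‖z‖ ^ n * ‖q‖ ^ (n * (n - 1) / 2) := by ring

lemma bound_summable (q z : ℂ) (hq : ‖q‖ < 1) :
    Summable (fun n : ℕ => 2 ^ n * ‖z‖ ^ n * ‖q‖ ^ (n * (n - 1) / 2)
      / ∏ j ∈ Finset.range n, (1 - ‖q‖ ^ (j + 1))) := by
  have hs : ‖q‖ < 1 := hq
  have hs0 : (0 : ℝ) ≤ ‖q‖ := norm_nonneg q
  have hfac : ∀ j : ℕ, (0 : ℝ) < 1 - ‖q‖ ^ (j + 1) := fun j =>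
    sub_pos.mpr (pow_lt_one₀ hs0 hs (Nat.succ_ne_zero j))
  set h : ℕ → ℝ := fun n => 2 ^ n * ‖z‖ ^ n * ‖q‖ ^ (n * (n - 1) / 2)
      / ∏ j ∈ Finset.range n, (1 - ‖q‖ ^ (j + 1)) with hh
  have hpos : ∀ n, 0 ≤ h n := fun n => by
    have := Finset.prod_pos (fun j (_ : j ∈ Finset.range n) => hfac j)
    positivity
  refine summable_of_ratio_norm_eventually_le (r := 1/2) (by norm_num) ?_
  have hpow : Filter.Tendsto (fun n : ℕ => ‖q‖ ^ n) Filter.atTop (𝓝 0) :=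
    tendsto_pow_atTop_nhds_zero_of_lt_one hs0 hs
  have h1 : ∀ᶠ n : ℕ in Filter.atTop, 2 * ‖z‖ * ‖q‖ ^ n < 1/4 :=
    ((hpow.const_mul (2 * ‖z‖)).eventually_lt_const (by norm_num) : _)
  have h2 : ∀ᶠ n : ℕ in Filter.atTop, ‖q‖ ^ (n + 1) < 1/2 := by
    have := hpow.comp (tendsto_add_atTop_nat 1)
    exact this.eventually_lt_const (by norm_num)
  filter_upwards [h1, h2] with n hn1 hn2
  rw [Real.norm_of_nonneg (hpos _), Real.norm_of_nonneg (hpos _)]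
  have hT : (n + 1) * ((n + 1) - 1) / 2 = n * (n - 1) / 2 + n := by
    have ha : (n + 1) * ((n + 1) - 1) / 2 = (n + 1).choose 2 := by
      rw [Nat.choose_two_right]
    have hb : n * (n - 1) / 2 = n.choose 2 := (Nat.choose_two_right n).symm
    rw [ha, hb, Nat.choose_succ_succ, Nat.choose_one_right, Nat.add_comm]
  have hdn : (0 : ℝ) < ∏ j ∈ Finset.range n, (1 - ‖q‖ ^ (j + 1)) :=
    Finset.prod_pos fun j _ => hfac j
  have hfe : h (n + 1) = h n * (2 * ‖z‖ * ‖q‖ ^ n / (1 - ‖q‖ ^ (n + 1))) := by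
    rw [hh]
    simp only
    rw [hT, Finset.prod_range_succ, pow_add]
    field_simp
    ring
  rw [hfe]
  have hratio : 2 * ‖z‖ * ‖q‖ ^ n / (1 - ‖q‖ ^ (n + 1)) ≤ 1/2 := by
    rw [div_le_iff₀ (hfac n)]
    nlinarith [hfac n]
  calc h n * (2 * ‖z‖ * ‖q‖ ^ n / (1 - ‖q‖ ^ (n + 1)))
      ≤ h n * (1/2) := by
        refine mul_le_mul_of_nonneg_left hratio (hpos n)
    _ = 1/2 * h n := by ring

theorem stmt_5 (q z : ℂ) (hq : ‖q‖ < 1) :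
    ∑' n : ℕ, q ^ (n * (n - 1) / 2) * (-z) ^ n
        / ∏ j ∈ Finset.range n, (1 - q ^ (j + 1))
      = ∏' j : ℕ, (1 - z * q ^ j) := by
  have hD := D_ne q hq
  set f : ℕ → ℂ := fun n => q ^ (n * (n - 1) / 2) * (-z) ^ n
      / ∏ j ∈ Finset.range n, (1 - q ^ (j + 1)) with hf
  have hTT : Filter.Tendsto (fun N => ∏ j ∈ Finset.range N, (1 - z * q ^ j)) Filter.atTop
      (𝓝 (∑' n, f n)) := by
    have ht := tendsto_tsum_of_dominated_convergence
      (f := fun N n => gg q z N n) (g := f)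
      (bound := fun n : ℕ => 2 ^ n * ‖z‖ ^ n * ‖q‖ ^ (n * (n - 1) / 2)
        / ∏ j ∈ Finset.range n, (1 - ‖q‖ ^ (j + 1)))
      (bound_summable q z hq) (fun n => gg_tendsto q z hq n)
      (Filter.Eventually.of_forall fun N n => gg_bound q z hq N n)
    refine ht.congr fun N => ?_
    rw [finite_id q z hD N]
    exact tsum_eq_sum fun n hn =>
      gg_zero_aux q z N n (by simpa using Finset.mem_range.not.mp hn)
  by_cases hzero : ∀ j : ℕ, 1 - z * q ^ j ≠ 0
  · have hlog : Summable fun j : ℕ => Complex.log (1 - z * q ^ j) := by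
      have hsumg : Summable (fun j : ℕ => (3/2 : ℝ) * (‖z‖ * ‖q‖ ^ j)) :=
        ((summable_geometric_of_lt_one (norm_nonneg q)
          hq).mul_left ‖z‖).mul_left (3/2)
      have hev : ∀ᶠ j : ℕ in Filter.atTop,
          ‖Complex.log (1 - z * q ^ j)‖ ≤ (3/2 : ℝ) * (‖z‖ * ‖q‖ ^ j) := by
        have hpow : Filter.Tendsto (fun j : ℕ => ‖z‖ * ‖q‖ ^ j) Filter.atTop (𝓝 0) := by
          have := (tendsto_pow_atTop_nhds_zero_of_lt_one (norm_nonneg q)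
            (hq : ‖q‖ < 1)).const_mul ‖z‖
          simpa using this
        filter_upwards [hpow.eventually_lt_const (by norm_num : (0:ℝ) < 1/2)] with j hj
        have hz2 : ‖-(z * q ^ j)‖ ≤ 1/2 := by
          rw [norm_neg, norm_mul, norm_pow]; exact hj.le
        have h5 := Complex.norm_log_one_add_half_le_self hz2
        rw [← sub_eq_add_neg] at h5
        rw [norm_neg, norm_mul, norm_pow] at h5
        exact h5
      exact Summable.of_norm_bounded_eventually_nat hsumg hev
    have hm : Multipliable fun j : ℕ => (1 - z * q ^ j) := by
      have := Complex.multipliable_of_summable_log hlog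
      exact this
    exact tendsto_nhds_unique hTT hm.hasProd.tendsto_prod_nat
  · push_neg at hzero
    obtain ⟨j0, hj0⟩ := hzero
    have hp0 : HasProd (fun j : ℕ => 1 - z * q ^ j) 0 := by
      have hev : ∀ᶠ s : Finset ℕ in Filter.atTop, ∏ j ∈ s, (1 - z * q ^ j) = 0 := by
        filter_upwards [Filter.eventually_ge_atTop ({j0} : Finset ℕ)] with s hs
        exact Finset.prod_eq_zero (hs (Finset.mem_singleton_self j0)) hj0
      exact Filter.Tendsto.congr' (hev.mono fun s h => h.symm) tendsto_const_nhds
    have hS : (∑' n, f n) = 0 := by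
      refine tendsto_nhds_unique hTT ?_
      refine Filter.Tendsto.congr' ?_ tendsto_const_nhds
      filter_upwards [Filter.eventually_ge_atTop (j0 + 1)] with N hN
      exact (Finset.prod_eq_zero (Finset.mem_range.mpr (by omega)) hj0).symm
    rw [hS, hp0.tprod_eq]
end

section
/- For $|q|<1$ and complex $a$ with $aq^n \neq 1$ for all $n \geq 1$: $\sum_{n=1}^{\infty} \frac{a q^n}{1-a q^n} = \sum_{n=1}^{\infty} \frac{(1-aq^{2n}) q^{n^2} a^n}{(1-aq^n)(1-q^n)}$. -/
open Finset Filter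

lemma key_identity (a q : ℂ)
    (hq : ∀ n : ℕ, 1 ≤ n → q ^ n ≠ 1)
    (ha : ∀ n : ℕ, 1 ≤ n → a * q ^ n ≠ 1) (N : ℕ) :
    ∑ n ∈ range N, a * q ^ (n + 1) / (1 - a * q ^ (n + 1))
      = ∑ n ∈ range N, (1 - a * q ^ (2 * (n + 1))) * q ^ ((n + 1) ^ 2) * a ^ (n + 1)
          / ((1 - a * q ^ (n + 1)) * (1 - q ^ (n + 1)))
        - ∑ m ∈ range N, (a * q ^ (N + 1)) ^ (m + 1) / (1 - q ^ (m + 1)) := by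
  induction N with
  | zero => simp
  | succ N IH =>
    have hE : ∑ m ∈ range (N + 1), (a * q ^ (N + 1 + 1)) ^ (m + 1) / (1 - q ^ (m + 1))
        = (∑ m ∈ range N, (a * q ^ (N + 1)) ^ (m + 1) / (1 - q ^ (m + 1)))
          - (∑ m ∈ range N, (a * q ^ (N + 1)) ^ (m + 1))
          + (a * q ^ (N + 1)) ^ (N + 1) * q ^ (N + 1) / (1 - q ^ (N + 1)) := by
      rw [Finset.sum_range_succ, ← Finset.sum_sub_distrib]
      congr 1
      · apply Finset.sum_congr rfl
        intro m _
        have h1 : (1 : ℂ) - q ^ (m + 1) ≠ 0 := by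
          intro h; exact hq (m + 1) (Nat.le_add_left 1 m) (sub_eq_zero.mp h).symm
        have hpow : (a * q ^ (N + 1 + 1)) ^ (m + 1)
            = (a * q ^ (N + 1)) ^ (m + 1) * q ^ (m + 1) := by
          rw [pow_succ q (N + 1)]; ring
        rw [hpow]
        field_simp
        ring
      · have hpow : (a * q ^ (N + 1 + 1)) ^ (N + 1)
            = (a * q ^ (N + 1)) ^ (N + 1) * q ^ (N + 1) := by
          rw [pow_succ q (N + 1)]; ring
        rw [hpow]
    have hx : a * q ^ (N + 1) ≠ 1 := ha (N + 1) (Nat.le_add_left 1 N)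
    have hG : ∑ m ∈ range N, (a * q ^ (N + 1)) ^ (m + 1)
        = a * q ^ (N + 1) * (((a * q ^ (N + 1)) ^ N - 1) / (a * q ^ (N + 1) - 1)) := by
      have hg := geom_sum_eq hx N
      calc ∑ m ∈ range N, (a * q ^ (N + 1)) ^ (m + 1)
          = (∑ m ∈ range N, (a * q ^ (N + 1)) ^ m) * (a * q ^ (N + 1)) := by
            rw [Finset.sum_mul]
            exact Finset.sum_congr rfl fun m _ => pow_succ _ m
        _ = a * q ^ (N + 1) * (((a * q ^ (N + 1)) ^ N - 1) / (a * q ^ (N + 1) - 1)) := by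
            rw [hg]; ring
    rw [Finset.sum_range_succ, Finset.sum_range_succ
      (f := fun n => (1 - a * q ^ (2 * (n + 1))) * q ^ ((n + 1) ^ 2) * a ^ (n + 1)
          / ((1 - a * q ^ (n + 1)) * (1 - q ^ (n + 1)))), hE, IH, hG]
    have e1 : q ^ (2 * (N + 1)) = q ^ (N + 1) * q ^ (N + 1) := by rw [two_mul, pow_add]
    have e2 : q ^ ((N + 1) ^ 2) * a ^ (N + 1) = (a * q ^ (N + 1)) ^ (N + 1) := by
      rw [sq, pow_mul, mul_pow, mul_comm]
    rw [e1, mul_assoc (1 - a * (q ^ (N + 1) * q ^ (N + 1)))]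
    rw [e2]
    have hy0 : (1 : ℂ) - q ^ (N + 1) ≠ 0 := by
      intro h; exact hq (N + 1) (Nat.le_add_left 1 N) (sub_eq_zero.mp h).symm
    have hx0 : (1 : ℂ) - a * q ^ (N + 1) ≠ 0 := by
      intro h; exact hx (sub_eq_zero.mp h).symm
    have hx1 : a * q ^ (N + 1) - 1 ≠ 0 := sub_ne_zero.mpr hx
    set y := q ^ (N + 1) with hyd
    set w := (a * y) ^ N with hwd
    have hw1 : (a * y) ^ (N + 1) = w * (a * y) := by rw [pow_succ]
    rw [hw1]
    field_simp
    ring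

theorem stmt_9 (a q : ℂ) (hq : ‖q‖ < 1)
    (ha : ∀ n : ℕ, 1 ≤ n → a * q ^ n ≠ 1) :
    ∑' n : ℕ, a * q ^ (n + 1) / (1 - a * q ^ (n + 1))
      = ∑' n : ℕ, (1 - a * q ^ (2 * (n + 1))) * q ^ ((n + 1) ^ 2) * a ^ (n + 1)
          / ((1 - a * q ^ (n + 1)) * (1 - q ^ (n + 1))) := by
  set r : ℝ := ‖q‖ with hr
  have hr0 : 0 ≤ r := norm_nonneg q
  have hr1 : r < 1 := hq
  have hq1 : ∀ n : ℕ, 1 ≤ n → q ^ n ≠ 1 := by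
    intro n hn h
    have : ‖q ^ n‖ < 1 := by
      rw [norm_pow]
      calc r ^ n ≤ r ^ 1 := pow_le_pow_of_le_one hr0 hr1.le hn
        _ = r := pow_one r
        _ < 1 := hr1
    rw [h] at this; simp at this
  have htend : Tendsto (fun n : ℕ => ‖a‖ * r ^ (n + 1)) atTop (nhds 0) := by
    have h2 : Tendsto (fun n : ℕ => r ^ (n + 1)) atTop (nhds 0) :=
      (tendsto_pow_atTop_nhds_zero_of_lt_one hr0 hr1).comp (tendsto_add_atTop_nat 1)
    simpa using h2.const_mul (‖a‖)
  have habs : ∀ n : ℕ, ‖a * q ^ (n + 1)‖ = ‖a‖ * r ^ (n + 1) := by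
    intro n; rw [norm_mul, norm_pow]
  have hev : ∀ᶠ n : ℕ in atTop, ‖a * q ^ (n + 1)‖ ≤ 1 / 2 := by
    filter_upwards [htend.eventually_le_const (by norm_num : (0:ℝ) < 1/2)] with n hn
    rw [habs]; exact hn
  have hden1 : ∀ n : ℕ, ‖a * q ^ (n + 1)‖ ≤ 1 / 2 →
      1 / 2 ≤ ‖1 - a * q ^ (n + 1)‖ := by
    intro n hn
    calc (1:ℝ)/2 = 1 - 1/2 := by norm_num
      _ ≤ 1 - ‖a * q ^ (n + 1)‖ := by linarith
      _ ≤ ‖1 - a * q ^ (n + 1)‖ := by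
          have := norm_sub_norm_le (1 : ℂ) (a * q ^ (n + 1))
          simpa using this
  have hden2 : ∀ n : ℕ, 1 - r ≤ ‖1 - q ^ (n + 1)‖ := by
    intro n
    have h1 : ‖q ^ (n + 1)‖ ≤ r := by
      rw [norm_pow]
      calc r ^ (n + 1) ≤ r ^ 1 := pow_le_pow_of_le_one hr0 hr1.le (Nat.le_add_left 1 n)
        _ = r := pow_one r
    calc 1 - r ≤ 1 - ‖q ^ (n + 1)‖ := by linarith
      _ ≤ ‖1 - q ^ (n + 1)‖ := by
          have := norm_sub_norm_le (1 : ℂ) (q ^ (n + 1))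
          simpa using this
  have hrpos : 0 < 1 - r := by linarith
  -- Summability of LHS
  have hL : Summable (fun n : ℕ => a * q ^ (n + 1) / (1 - a * q ^ (n + 1))) := by
    apply Summable.of_norm_bounded_eventually_nat (g := fun n => 2 * ‖a‖ * r ^ (n + 1))
    · have : Summable (fun n : ℕ => r ^ n) := summable_geometric_of_lt_one hr0 hr1
      simpa [pow_succ, mul_comm, mul_assoc, mul_left_comm] using
        (this.mul_left (2 * ‖a‖ * r))
    · filter_upwards [hev] with n hn
      have hd := hden1 n hn
      have hdpos : (0:ℝ) < ‖1 - a * q ^ (n + 1)‖ := by linarith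
      rw [norm_div]
      rw [div_le_iff₀ hdpos]
      calc ‖a * q ^ (n + 1)‖ = ‖a‖ * r ^ (n + 1) := habs n
        _ = (2 * ‖a‖ * r ^ (n + 1)) * (1/2) := by ring
        _ ≤ (2 * ‖a‖ * r ^ (n + 1)) * ‖1 - a * q ^ (n + 1)‖ := by
            apply mul_le_mul_of_nonneg_left hd
            positivity
  -- Summability of RHS
  have hR : Summable (fun n : ℕ => (1 - a * q ^ (2 * (n + 1))) * q ^ ((n + 1) ^ 2) * a ^ (n + 1)
      / ((1 - a * q ^ (n + 1)) * (1 - q ^ (n + 1)))) := by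
    apply Summable.of_norm_bounded_eventually_nat
      (g := fun n => (3 / (1 - r)) * (1/2) ^ n)
    · exact (summable_geometric_of_lt_one (by norm_num) (by norm_num)).mul_left _
    · filter_upwards [hev] with n hn
      have hd1 := hden1 n hn
      have hd2 := hden2 n
      have hnum1 : ‖1 - a * q ^ (2 * (n + 1))‖ ≤ 3 / 2 := by
        have h1 : ‖a * q ^ (2 * (n + 1))‖ ≤ 1 / 2 := by
          have : a * q ^ (2 * (n + 1)) = (a * q ^ (n + 1)) * q ^ (n + 1) := by
            rw [two_mul, pow_add]; ring
          rw [this, norm_mul]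
          calc ‖a * q ^ (n + 1)‖ * ‖q ^ (n + 1)‖
              ≤ (1/2) * 1 := by
                apply mul_le_mul hn _ (norm_nonneg _) (by norm_num)
                rw [norm_pow]
                exact pow_le_one₀ hr0 hr1.le
            _ = 1/2 := by norm_num
        calc ‖1 - a * q ^ (2 * (n + 1))‖
            ≤ ‖(1:ℂ)‖ + ‖a * q ^ (2 * (n + 1))‖ := by
              simpa [sub_eq_add_neg] using
                norm_add_le (1:ℂ) (-(a * q ^ (2 * (n + 1))))
          _ ≤ 1 + 1/2 := by simp only [norm_one]; linarith
          _ = 3/2 := by norm_num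
      have hnum2 : ‖q ^ ((n + 1) ^ 2) * a ^ (n + 1)‖ ≤ (1/2) ^ (n + 1) := by
        have : q ^ ((n + 1) ^ 2) * a ^ (n + 1) = (a * q ^ (n + 1)) ^ (n + 1) := by
          rw [sq, pow_mul, mul_pow, mul_comm]
        rw [this, norm_pow]
        exact pow_le_pow_left₀ (norm_nonneg _) hn _
      rw [norm_div]
      have hdeq : ‖(1 - a * q ^ (n + 1)) * (1 - q ^ (n + 1))‖
          = ‖1 - a * q ^ (n + 1)‖ * ‖1 - q ^ (n + 1)‖ := norm_mul _ _
      have hdpos : (0:ℝ) < ‖1 - a * q ^ (n + 1)‖ * ‖1 - q ^ (n + 1)‖ := by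
        apply mul_pos <;> linarith
      rw [hdeq, div_le_iff₀ hdpos]
      calc ‖(1 - a * q ^ (2 * (n + 1))) * q ^ ((n + 1) ^ 2) * a ^ (n + 1)‖
          = ‖1 - a * q ^ (2 * (n + 1))‖ *
              ‖q ^ ((n + 1) ^ 2) * a ^ (n + 1)‖ := by
            rw [mul_assoc, norm_mul]
        _ ≤ (3/2) * (1/2) ^ (n + 1) := by
            apply mul_le_mul hnum1 hnum2 (norm_nonneg _) (by norm_num)
        _ = (3 / (1 - r)) * (1/2) ^ n * ((1 - r) * (1/2) * (1/2)) := by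
            field_simp; ring
        _ ≤ (3 / (1 - r)) * (1/2) ^ n *
              (‖1 - a * q ^ (n + 1)‖ * ‖1 - q ^ (n + 1)‖) := by
            apply mul_le_mul_of_nonneg_left _ (by positivity)
            calc (1 - r) * (1/2) * (1/2) = (1/2) * ((1/2) * (1 - r)) := by ring
              _ ≤ ‖1 - a * q ^ (n + 1)‖ * ‖1 - q ^ (n + 1)‖ := by
                  apply mul_le_mul hd1 _ (by positivity) (norm_nonneg _)
                  nlinarith
  -- E_N tends to 0
  have hE0 : Tendsto (fun N : ℕ =>
      ∑ m ∈ range N, (a * q ^ (N + 1)) ^ (m + 1) / (1 - q ^ (m + 1))) atTop (nhds 0) := by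
    have hg : Tendsto (fun N : ℕ => (2 / (1 - r)) * (‖a‖ * r ^ (N + 1)))
        atTop (nhds 0) := by simpa using htend.const_mul (2 / (1 - r))
    apply squeeze_zero_norm' _ hg
    filter_upwards [hev] with N hN
    calc ‖∑ m ∈ range N, (a * q ^ (N + 1)) ^ (m + 1) / (1 - q ^ (m + 1))‖
        ≤ ∑ m ∈ range N, ‖(a * q ^ (N + 1)) ^ (m + 1) / (1 - q ^ (m + 1))‖ :=
          norm_sum_le _ _
      _ ≤ ∑ m ∈ range N, (‖a‖ * r ^ (N + 1)) * (1/2) ^ m / (1 - r) := by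
          apply Finset.sum_le_sum
          intro m _
          rw [norm_div, norm_pow]
          apply div_le_div₀ _ _ hrpos (hden2 m)
          · positivity
          · calc ‖a * q ^ (N + 1)‖ ^ (m + 1)
                = ‖a * q ^ (N + 1)‖ * ‖a * q ^ (N + 1)‖ ^ m := by
                  rw [pow_succ]; ring
              _ ≤ (‖a‖ * r ^ (N + 1)) * (1/2) ^ m := by
                  apply mul_le_mul (le_of_eq (habs N))
                    (pow_le_pow_left₀ (norm_nonneg _) hN m)
                    (by positivity) (by positivity)
      _ = (‖a‖ * r ^ (N + 1)) / (1 - r) * ∑ m ∈ range N, (1/2) ^ m := by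
          rw [Finset.mul_sum]; apply Finset.sum_congr rfl; intro m _; ring
      _ ≤ (‖a‖ * r ^ (N + 1)) / (1 - r) * 2 := by
          apply mul_le_mul_of_nonneg_left _ (by positivity)
          simpa using sum_geometric_two_le N
      _ = (2 / (1 - r)) * (‖a‖ * r ^ (N + 1)) := by ring
  have hkey := key_identity a q hq1 ha
  have hLt := hL.hasSum.tendsto_sum_nat
  have hRt := hR.hasSum.tendsto_sum_nat
  have h2 := hRt.sub hE0
  rw [sub_zero] at h2
  have h3 : Tendsto (fun N : ℕ => ∑ n ∈ range N, a * q ^ (n + 1) / (1 - a * q ^ (n + 1)))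
      atTop (nhds (∑' n : ℕ, (1 - a * q ^ (2 * (n + 1))) * q ^ ((n + 1) ^ 2) * a ^ (n + 1)
          / ((1 - a * q ^ (n + 1)) * (1 - q ^ (n + 1))))) := by
    apply h2.congr
    intro N
    exact (hkey N).symm
  exact tendsto_nhds_unique hLt h3
end

section
/- For $|q|<1$ and complex $a$ with $|a|<1/|q|$ and $aq^n \neq 1$ for all $n \geq 1$: $\sum_{n=1}^{\infty} \frac{a q^n}{1-a q^n} = -\sum_{n=1}^{\infty} \frac{q^{n(n+1)/2}(-a)^n}{(qa;q)_n (1-q^n)}$, where $(qa;q)_n = \prod_{j=1}^{n}(1-aq^j)$. -/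
open Finset Filter Topology

lemma aux_exp_le_one_sub {x c : ℝ} (hx : 0 ≤ x) (hxc : x ≤ c) (hc : c < 1) :
    Real.exp (-(x / (1 - c))) ≤ 1 - x := by
  have h1c : 0 < 1 - c := by linarith
  have hd : 0 ≤ x / (1 - c) := div_nonneg hx h1c.le
  have h1 : 0 < 1 + x / (1 - c) := by linarith
  have h2 : 1 + x / (1 - c) ≤ Real.exp (x / (1 - c)) := by
    have := Real.add_one_le_exp (x / (1 - c)); linarith
  have h3 : Real.exp (-(x / (1 - c))) ≤ 1 / (1 + x / (1 - c)) := by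
    rw [Real.exp_neg, one_div]
    exact inv_anti₀ h1 h2
  refine h3.trans ?_
  rw [div_le_iff₀ h1]
  have hfrac : x / (1 - c) * (1 - c) = x := div_mul_cancel₀ _ h1c.ne'
  nlinarith [mul_nonneg hx (by linarith : (0:ℝ) ≤ c - x)]

noncomputable def epsB (a q : ℂ) : ℝ :=
  Real.exp (-((‖a‖ * ‖q‖ + ‖a‖ * ‖q‖ / (1 - ‖q‖)) / (1 - ‖a‖ * ‖q‖)))

lemma epsB_pos (a q : ℂ) : 0 < epsB a q := Real.exp_pos _

lemma aux_norm_term (a q : ℂ) {j : ℕ} (hj : j ≠ 0) :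
    ‖a * q ^ j‖ = (‖a‖ * ‖q‖) * ‖q‖ ^ (j - 1) := by
  have h : j = (j - 1) + 1 := by omega
  rw [norm_mul, norm_pow]
  conv_lhs => rw [h]
  rw [pow_succ]
  ring

lemma aux_prod_lb {a q : ℂ} (hq : ‖q‖ < 1) (hq0 : q ≠ 0) (hc : ‖a‖ * ‖q‖ < 1)
    (s : Finset ℕ) (hs : ∀ j ∈ s, j ≠ 0) :
    epsB a q ≤ ∏ j ∈ s, ‖1 - a * q ^ j‖ := by
  set r : ℝ := ‖q‖ with hr
  set c : ℝ := ‖a‖ * ‖q‖ with hcdef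
  have hr0 : 0 < r := norm_pos_iff.mpr hq0
  have hc0 : 0 ≤ c := mul_nonneg (norm_nonneg _) (norm_nonneg _)
  have h1c : 0 < 1 - c := by linarith
  have h1r : 0 < 1 - r := by linarith
  -- each term ≤ c
  have hterm_le : ∀ j ∈ s, ‖a * q ^ j‖ ≤ c := by
    intro j hj
    rw [aux_norm_term a q (hs j hj)]
    have : r ^ (j - 1) ≤ 1 := pow_le_one₀ hr0.le hq.le
    nlinarith
  -- summability of the geometric bound
  have hsummable : Summable (fun j : ℕ => c * r ^ (j - 1)) := by
    apply Summable.of_nonneg_of_le (fun j => by positivity)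
      (fun j => ?_) (((summable_geometric_of_lt_one hr0.le hq).mul_left (c / r)))
    · cases j with
      | zero =>
        simp only [Nat.zero_sub, pow_zero, mul_one]
        rw [le_div_iff₀ hr0]
        exact mul_le_of_le_one_right hc0 hq.le
      | succ n =>
        simp only [Nat.succ_sub_one]
        rw [pow_succ]
        exact le_of_eq (by field_simp)
  -- sum bound over s
  have hsum_le : ∑ j ∈ s, ‖a * q ^ j‖ ≤ c + c / (1 - r) := by
    calc ∑ j ∈ s, ‖a * q ^ j‖ = ∑ j ∈ s, c * r ^ (j - 1) := by
          refine Finset.sum_congr rfl fun j hj => aux_norm_term a q (hs j hj)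
      _ ≤ ∑' j : ℕ, c * r ^ (j - 1) := Summable.sum_le_tsum s (fun i _ => by positivity) hsummable
      _ = c * r ^ (0 - 1) + ∑' j : ℕ, c * r ^ ((j + 1) - 1) := Summable.tsum_eq_zero_add hsummable
      _ = c + c / (1 - r) := by
          simp only [Nat.zero_sub, pow_zero, mul_one, Nat.add_sub_cancel]
          rw [tsum_mul_left, tsum_geometric_of_lt_one hr0.le hq, div_eq_mul_inv]
  -- chain
  calc epsB a q ≤ Real.exp (-((∑ j ∈ s, ‖a * q ^ j‖) / (1 - c))) := by
        unfold epsB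
        apply Real.exp_le_exp.mpr
        rw [neg_le_neg_iff]
        gcongr
    _ = ∏ j ∈ s, Real.exp (-(‖a * q ^ j‖ / (1 - c))) := by
        rw [← Real.exp_sum]
        congr 1
        rw [Finset.sum_neg_distrib, ← Finset.sum_div]
    _ ≤ ∏ j ∈ s, ‖1 - a * q ^ j‖ := by
        apply Finset.prod_le_prod (fun j _ => (Real.exp_pos _).le)
        intro j hj
        have h1 : 1 - ‖a * q ^ j‖ ≤ ‖1 - a * q ^ j‖ := by
          have := norm_sub_norm_le (1 : ℂ) (a * q ^ j)
          simpa using this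
        exact (aux_exp_le_one_sub (norm_nonneg _) (hterm_le j hj) hc).trans h1

/-- The product `∏_{j=s}^{t-1} (1 - a q^j)`. -/
noncomputable def qD (a q : ℂ) (s t : ℕ) : ℂ := ∏ j ∈ Finset.Ico s t, (1 - a * q ^ j)

lemma qD_norm_lb {a q : ℂ} (hq : ‖q‖ < 1) (hq0 : q ≠ 0) (hc : ‖a‖ * ‖q‖ < 1)
    {s : ℕ} (hs : 1 ≤ s) (t : ℕ) : epsB a q ≤ ‖qD a q s t‖ := by
  rw [qD, norm_prod]
  exact aux_prod_lb hq hq0 hc _ (fun j hj => by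
    have := (Finset.mem_Ico.mp hj).1; omega)

lemma qD_ne_zero {a q : ℂ} (hq : ‖q‖ < 1) (hq0 : q ≠ 0) (hc : ‖a‖ * ‖q‖ < 1)
    {s : ℕ} (hs : 1 ≤ s) (t : ℕ) : qD a q s t ≠ 0 := by
  have := (epsB_pos a q).trans_le (qD_norm_lb hq hq0 hc hs t)
  exact norm_pos_iff.mp this

lemma one_sub_aq_ne {a q : ℂ} (hq : ‖q‖ < 1) (hc : ‖a‖ * ‖q‖ < 1)
    {j : ℕ} (hj : j ≠ 0) : 1 - a * q ^ j ≠ 0 := by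
  have h1 : ‖a * q ^ j‖ ≤ ‖a‖ * ‖q‖ := by
    rw [aux_norm_term a q hj]
    have h2 : ‖q‖ ^ (j - 1) ≤ 1 := pow_le_one₀ (norm_nonneg _) hq.le
    have : 0 ≤ ‖a‖ * ‖q‖ := by positivity
    nlinarith
  intro h
  have h3 : a * q ^ j = 1 := by linear_combination -h
  rw [h3] at h1
  simp only [norm_one] at h1
  linarith

lemma one_sub_qpow_ne {q : ℂ} (hq : ‖q‖ < 1) {m : ℕ} (hm : m ≠ 0) :
    (1 : ℂ) - q ^ m ≠ 0 := by
  intro h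
  have h3 : q ^ m = 1 := by linear_combination -h
  have : ‖q ^ m‖ < 1 := by
    rw [norm_pow]
    exact pow_lt_one₀ (norm_nonneg _) hq (by omega)
  rw [h3] at this; simp at this

/-- The double-indexed summand. -/
noncomputable def Ff (a q : ℂ) (N K : ℕ) : ℂ :=
  -((-1) ^ (N + 1) * a ^ (N + 1) * q ^ ((N + 1) * K + (N + 1) * (N + 2) / 2)
      / qD a q (K + 1) (K + 2 + (N + 1)))

lemma tri_succ (m : ℕ) : (m + 1) * (m + 2) / 2 = m * (m + 1) / 2 + (m + 1) := by
  have h3 : (m + 1) * (m + 2) = m * (m + 1) + 2 * (m + 1) := by ring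
  obtain ⟨t, ht⟩ := Nat.even_mul_succ_self m
  rw [h3, ht]
  omega

lemma tri_ge (m : ℕ) : m ≤ m * (m + 1) / 2 := by
  have h : m * 2 ≤ m * (m + 1) := by
    rcases Nat.eq_zero_or_pos m with hm | hm
    · subst hm; simp
    · have h2 : m ≤ m * m := Nat.le_mul_of_pos_left m hm
      nlinarith
  exact (Nat.le_div_iff_mul_le (by norm_num)).mpr h

lemma Ff_norm_le {a q : ℂ} (hq : ‖q‖ < 1) (hq0 : q ≠ 0) (hc : ‖a‖ * ‖q‖ < 1)
    (N K : ℕ) :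
    ‖Ff a q N K‖ ≤ (‖a‖ * ‖q‖) ^ (N + 1) * ‖q‖ ^ K / epsB a q := by
  set r : ℝ := ‖q‖
  have hr0 : 0 ≤ r := norm_nonneg _
  rw [Ff, norm_neg, norm_div, norm_mul, norm_mul, norm_pow, norm_pow, norm_pow,
    norm_neg, norm_one, one_pow, one_mul]
  have hnum : ‖a‖ ^ (N + 1) * r ^ ((N + 1) * K + (N + 1) * (N + 2) / 2)
      ≤ (‖a‖ * r) ^ (N + 1) * r ^ K := by
    have he : (N + 1) + K ≤ (N + 1) * K + (N + 1) * (N + 2) / 2 := by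
      have h1 : N + 1 ≤ (N + 1) * (N + 2) / 2 := by
        rw [tri_succ]; exact Nat.le_add_left _ _
      have h2 : K ≤ (N + 1) * K := Nat.le_mul_of_pos_left K (by omega)
      omega
    have hpow : r ^ ((N + 1) * K + (N + 1) * (N + 2) / 2) ≤ r ^ ((N + 1) + K) :=
      pow_le_pow_of_le_one hr0 hq.le he
    calc ‖a‖ ^ (N + 1) * r ^ ((N + 1) * K + (N + 1) * (N + 2) / 2)
        ≤ ‖a‖ ^ (N + 1) * r ^ ((N + 1) + K) := by
          apply mul_le_mul_of_nonneg_left hpow (by positivity)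
      _ = (‖a‖ * r) ^ (N + 1) * r ^ K := by rw [pow_add, mul_pow]; ring
  exact div_le_div₀ (by positivity) hnum (epsB_pos a q)
    (qD_norm_lb hq hq0 hc (by omega) _)

lemma hasSumA {a q : ℂ} (hq : ‖q‖ < 1) (hq0 : q ≠ 0) (hc : ‖a‖ * ‖q‖ < 1) (K : ℕ) :
    HasSum (fun N : ℕ => Ff a q N K)
      (a * q ^ (K + 1) / (1 - a * q ^ (K + 1))) := by
  set c : ℝ := ‖a‖ * ‖q‖ with hcdef
  have hc0 : 0 ≤ c := by positivity
  set f : ℕ → ℂ := fun m =>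
    (-1) ^ m * a ^ m * q ^ (m * K + m * (m + 1) / 2) / qD a q (K + 1) (K + 1 + m)
    with hfdef
  have hne : ∀ j : ℕ, j ≠ 0 → 1 - a * q ^ j ≠ 0 := fun j hj => one_sub_aq_ne hq hc hj
  -- telescoping identity
  have hdiff : ∀ m : ℕ, f m - f (m + 1)
      = (-1) ^ m * a ^ m * q ^ (m * K + m * (m + 1) / 2) / qD a q (K + 1) (K + 2 + m) := by
    intro m
    have hsplit : qD a q (K + 1) (K + 2 + m)
        = qD a q (K + 1) (K + 1 + m) * (1 - a * q ^ (K + 1 + m)) := by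
      have h1 : K + 2 + m = (K + 1 + m) + 1 := by omega
      rw [h1, qD, qD, Finset.prod_Ico_succ_top (by omega)]
    have hexp : (m + 1) * K + (m + 1) * (m + 1 + 1) / 2
        = (m * K + m * (m + 1) / 2) + (K + 1 + m) := by
      have h2 : (m + 1) * (m + 1 + 1) = m * (m + 1) + 2 * (m + 1) := by ring
      have hK : (m + 1) * K = m * K + K := by ring
      obtain ⟨t, ht⟩ := Nat.even_mul_succ_self m
      omega
    have hP : qD a q (K + 1) (K + 1 + m) ≠ 0 := qD_ne_zero hq hq0 hc (by omega) _
    have hx : 1 - a * q ^ (K + 1 + m) ≠ 0 := hne _ (by omega)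
    simp only [hfdef]
    rw [show K + 1 + (m + 1) = K + 2 + m from by omega, hexp, hsplit, pow_add, pow_succ]
    field_simp
    ring
  have h1 : f 1 = -(a * q ^ (K + 1)) / (1 - a * q ^ (K + 1)) := by
    simp only [hfdef]
    norm_num [qD, Nat.Ico_succ_singleton]
  -- norm bound for f
  have hfbound : ∀ m : ℕ, ‖f m‖ ≤ c ^ m / epsB a q := by
    intro m
    simp only [hfdef]
    rw [norm_div, norm_mul, norm_mul, norm_pow, norm_pow, norm_pow, norm_neg,
      norm_one, one_pow, one_mul]
    have he : m ≤ m * K + m * (m + 1) / 2 := le_add_of_le_right (tri_ge m)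
    have hnum : ‖a‖ ^ m * ‖q‖ ^ (m * K + m * (m + 1) / 2) ≤ c ^ m := by
      calc ‖a‖ ^ m * ‖q‖ ^ (m * K + m * (m + 1) / 2)
          ≤ ‖a‖ ^ m * ‖q‖ ^ m := by
            apply mul_le_mul_of_nonneg_left
              (pow_le_pow_of_le_one (norm_nonneg _) hq.le he) (by positivity)
        _ = c ^ m := by rw [hcdef, mul_pow]
    exact div_le_div₀ (by positivity) hnum (epsB_pos a q)
      (qD_norm_lb hq hq0 hc (by omega) _)
  have htend : Tendsto f atTop (𝓝 0) := by
    apply squeeze_zero_norm hfbound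
    have : Tendsto (fun m : ℕ => c ^ m) atTop (𝓝 0) :=
      tendsto_pow_atTop_nhds_zero_of_lt_one hc0 hc
    simpa using this.div_const (epsB a q)
  -- relation between Ff and f
  have hFf : ∀ N : ℕ, Ff a q N K = f (N + 2) - f (N + 1) := by
    intro N
    have h := hdiff (N + 1)
    have : Ff a q N K = -(f (N + 1) - f (N + 2)) := by
      rw [h, Ff]
    rw [this]; ring
  -- summability
  have hsummable : Summable (fun N : ℕ => Ff a q N K) := by
    apply Summable.of_norm_bounded (g := fun N => c ^ (N + 1) * ‖q‖ ^ K / epsB a q)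
      ?_ (fun N => Ff_norm_le hq hq0 hc N K)
    have hgeo : Summable (fun N : ℕ => c ^ N) := summable_geometric_of_lt_one hc0 hc
    have : Summable (fun N : ℕ => c ^ (N + 1)) := by
      simpa [pow_succ] using hgeo.mul_right c
    simpa [mul_div_assoc] using this.mul_right (‖q‖ ^ K / epsB a q)
  rw [hsummable.hasSum_iff_tendsto_nat]
  have hpartial : ∀ n : ℕ, ∑ i ∈ Finset.range n, Ff a q i K = f (n + 1) - f 1 := by
    intro n
    calc ∑ i ∈ Finset.range n, Ff a q i K
        = ∑ i ∈ Finset.range n, ((fun j => f (j + 1)) (i + 1) - (fun j => f (j + 1)) i) :=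
          Finset.sum_congr rfl (fun i _ => hFf i)
      _ = f (n + 1) - f 1 := Finset.sum_range_sub (fun j => f (j + 1)) n
    
  simp only [hpartial]
  have hlim : Tendsto (fun n : ℕ => f (n + 1) - f 1) atTop (𝓝 (0 - f 1)) :=
    ((htend.comp (tendsto_add_atTop_nat 1)).sub_const (f 1))
  convert hlim using 2
  rw [h1]
  ring

lemma hasSumB {a q : ℂ} (hq : ‖q‖ < 1) (hq0 : q ≠ 0) (hc : ‖a‖ * ‖q‖ < 1) (N : ℕ) :
    HasSum (fun K : ℕ => Ff a q N K)
      (-((-1) ^ (N + 1) * a ^ (N + 1) * q ^ ((N + 1) * (N + 2) / 2)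
          / (qD a q 1 (N + 2) * (1 - q ^ (N + 1))))) := by
  set c : ℝ := ‖a‖ * ‖q‖ with hcdef
  have hc0 : 0 ≤ c := by positivity
  have hr0 : 0 ≤ ‖q‖ := norm_nonneg _
  set G : ℕ → ℂ := fun K => q ^ ((N + 1) * K) / qD a q (K + 1) (N + K + 2) with hGdef
  have hq1 : (1 : ℂ) - q ^ (N + 1) ≠ 0 := one_sub_qpow_ne hq (by omega)
  have hne : ∀ j : ℕ, j ≠ 0 → 1 - a * q ^ j ≠ 0 := fun j hj => one_sub_aq_ne hq hc hj
  have hDne : ∀ s t : ℕ, 1 ≤ s → qD a q s t ≠ 0 :=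
    fun s t hs => qD_ne_zero hq hq0 hc hs t
  -- telescoping identity
  have hdiffB : ∀ K : ℕ, G K - G (K + 1)
      = (1 - q ^ (N + 1)) * q ^ ((N + 1) * K) / qD a q (K + 1) (K + 2 + (N + 1)) := by
    intro K
    have hs1 : qD a q (K + 1) (K + 2 + (N + 1))
        = (1 - a * q ^ (K + 1)) * qD a q (K + 1 + 1) (K + 2 + (N + 1)) := by
      rw [qD, qD, Finset.prod_eq_prod_Ico_succ_bot (by omega)]
    have hs2 : qD a q (K + 1) (K + 2 + (N + 1))
        = qD a q (K + 1) (N + K + 2) * (1 - a * q ^ (N + K + 2)) := by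
      rw [show K + 2 + (N + 1) = (N + K + 2) + 1 from by omega, qD, qD,
        Finset.prod_Ico_succ_top (by omega)]
    have hD1 : qD a q (K + 1) (N + K + 2) ≠ 0 := hDne _ _ (by omega)
    have hx2 : 1 - a * q ^ (N + K + 2) ≠ 0 := hne _ (by omega)
    have hx1 : 1 - a * q ^ (K + 1) ≠ 0 := hne _ (by omega)
    have hD2 : qD a q (K + 1 + 1) (K + 2 + (N + 1)) ≠ 0 := hDne _ _ (by omega)
    simp only [hGdef]
    rw [show N + (K + 1) + 2 = K + 2 + (N + 1) from by omega]
    have e1 : q ^ ((N + 1) * K) / qD a q (K + 1) (N + K + 2)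
        = q ^ ((N + 1) * K) * (1 - a * q ^ (N + K + 2))
            / qD a q (K + 1) (K + 2 + (N + 1)) := by
      rw [hs2, mul_div_mul_right _ _ hx2]
    have e2 : q ^ ((N + 1) * (K + 1)) / qD a q (K + 1 + 1) (K + 2 + (N + 1))
        = (1 - a * q ^ (K + 1)) * q ^ ((N + 1) * (K + 1))
            / qD a q (K + 1) (K + 2 + (N + 1)) := by
      rw [hs1, mul_div_mul_left _ _ hx1]
    rw [e1, e2, div_sub_div_same]
    congr 1
    rw [show (N + 1) * (K + 1) = (N + 1) * K + (N + 1) from by ring,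
      show N + K + 2 = (K + 1) + (N + 1) from by omega, pow_add, pow_add]
    ring
  -- Ff in terms of G
  have hFfB : ∀ K : ℕ, Ff a q N K
      = -((-1) ^ (N + 1) * a ^ (N + 1) * q ^ ((N + 1) * (N + 2) / 2) / (1 - q ^ (N + 1)))
        * (G K - G (K + 1)) := by
    intro K
    rw [hdiffB K, Ff, pow_add]
    have hD : qD a q (K + 1) (K + 2 + (N + 1)) ≠ 0 := hDne _ _ (by omega)
    field_simp
    ring
  -- limit of G
  have htendG : Tendsto G atTop (𝓝 0) := by
    have hGbound : ∀ K : ℕ, ‖G K‖ ≤ ‖q‖ ^ K / epsB a q := by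
      intro K
      simp only [hGdef]
      rw [norm_div, norm_pow]
      have hKe : K ≤ (N + 1) * K := Nat.le_mul_of_pos_left K (by omega)
      have hnum : ‖q‖ ^ ((N + 1) * K) ≤ ‖q‖ ^ K :=
        pow_le_pow_of_le_one hr0 hq.le hKe
      exact div_le_div₀ (by positivity) hnum (epsB_pos a q)
        (qD_norm_lb hq hq0 hc (by omega) _)
    apply squeeze_zero_norm hGbound
    have : Tendsto (fun K : ℕ => ‖q‖ ^ K) atTop (𝓝 0) :=
      tendsto_pow_atTop_nhds_zero_of_lt_one hr0 hq
    simpa using this.div_const (epsB a q)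
  -- summability
  have hsummable : Summable (fun K : ℕ => Ff a q N K) := by
    apply Summable.of_norm_bounded (g := fun K => c ^ (N + 1) * ‖q‖ ^ K / epsB a q)
      ?_ (fun K => Ff_norm_le hq hq0 hc N K)
    have hgeo : Summable (fun K : ℕ => ‖q‖ ^ K) := summable_geometric_of_lt_one hr0 hq
    simpa [mul_div_assoc] using (hgeo.mul_left (c ^ (N + 1))).div_const (epsB a q)
  rw [hsummable.hasSum_iff_tendsto_nat]
  set C : ℂ := -((-1) ^ (N + 1) * a ^ (N + 1) * q ^ ((N + 1) * (N + 2) / 2)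
    / (1 - q ^ (N + 1))) with hCdef
  have hpartial : ∀ n : ℕ, ∑ i ∈ Finset.range n, Ff a q N i = C * (G 0 - G n) := by
    intro n
    calc ∑ i ∈ Finset.range n, Ff a q N i
        = ∑ i ∈ Finset.range n, C * (G i - G (i + 1)) :=
          Finset.sum_congr rfl (fun i _ => hFfB i)
      _ = C * ∑ i ∈ Finset.range n, (G i - G (i + 1)) := by rw [Finset.mul_sum]
      _ = C * (G 0 - G n) := by rw [Finset.sum_range_sub' G n]
  simp only [hpartial]
  have hlim : Tendsto (fun n : ℕ => C * (G 0 - G n)) atTop (𝓝 (C * (G 0 - 0))) :=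
    (tendsto_const_nhds.sub htendG).const_mul C
  convert hlim using 2
  have hG0 : G 0 = 1 / qD a q 1 (N + 2) := by
    simp only [hGdef]
    norm_num
  rw [hG0, hCdef]
  have hD : qD a q 1 (N + 2) ≠ 0 := hDne _ _ (by omega)
  field_simp
  ring

lemma Ff_summable_uncurry {a q : ℂ} (hq : ‖q‖ < 1) (hq0 : q ≠ 0)
    (hc : ‖a‖ * ‖q‖ < 1) : Summable (Function.uncurry (Ff a q)) := by
  set c : ℝ := ‖a‖ * ‖q‖ with hcdef
  have hc0 : 0 ≤ c := by positivity
  have hr0 : 0 ≤ ‖q‖ := norm_nonneg _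
  apply Summable.of_norm_bounded
    (g := fun p : ℕ × ℕ => (c ^ (p.1 + 1) / epsB a q) * ‖q‖ ^ p.2) ?_ ?_
  · have h1 : Summable (fun N : ℕ => c ^ (N + 1) / epsB a q) := by
      have hgeo : Summable (fun N : ℕ => c ^ N) := summable_geometric_of_lt_one hc0 hc
      have : Summable (fun N : ℕ => c ^ (N + 1)) := by
        simpa [pow_succ] using hgeo.mul_right c
      exact this.div_const (epsB a q)
    have h2 : Summable (fun K : ℕ => ‖q‖ ^ K) := summable_geometric_of_lt_one hr0 hq
    exact Summable.mul_of_nonneg h1 h2 (fun N => div_nonneg (by positivity) (epsB_pos a q).le) (fun K => by positivity)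
  · intro p
    have h := Ff_norm_le hq hq0 hc p.1 p.2
    calc ‖Function.uncurry (Ff a q) p‖ = ‖Ff a q p.1 p.2‖ := rfl
      _ ≤ c ^ (p.1 + 1) * ‖q‖ ^ p.2 / epsB a q := h
      _ = (c ^ (p.1 + 1) / epsB a q) * ‖q‖ ^ p.2 := by ring

theorem stmt_10 (a q : ℂ) (hq : ‖q‖ < 1)
    (ha : ‖a‖ < 1 / ‖q‖)
    (ha' : ∀ n : ℕ, 1 ≤ n → a * q ^ n ≠ 1) :
    ∑' n : ℕ, a * q ^ (n + 1) / (1 - a * q ^ (n + 1))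
      = - ∑' n : ℕ, q ^ ((n + 1) * (n + 2) / 2) * (-a) ^ (n + 1)
          / ((∏ j ∈ Finset.range (n + 1), (1 - a * q ^ (j + 1)))
              * (1 - q ^ (n + 1))) := by
  have hq0 : q ≠ 0 := by
    intro h
    rw [h, norm_zero, div_zero] at ha
    exact absurd ha (not_lt.mpr (norm_nonneg a))
  have hqn : ‖q‖ < 1 := by exact hq
  have hc : ‖a‖ * ‖q‖ < 1 := by
    have h0 : 0 < ‖q‖ := norm_pos_iff.mpr hq0
    exact (lt_div_iff₀ h0).mp ha
  calc ∑' n : ℕ, a * q ^ (n + 1) / (1 - a * q ^ (n + 1))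
      = ∑' K : ℕ, ∑' N : ℕ, Ff a q N K :=
        tsum_congr fun K => ((hasSumA hqn hq0 hc K).tsum_eq).symm
    _ = ∑' N : ℕ, ∑' K : ℕ, Ff a q N K :=
        Summable.tsum_comm' (Ff_summable_uncurry hqn hq0 hc)
          (fun N => (hasSumB hqn hq0 hc N).summable)
          (fun K => (hasSumA hqn hq0 hc K).summable)
    _ = ∑' N : ℕ, -(q ^ ((N + 1) * (N + 2) / 2) * (-a) ^ (N + 1)
          / ((∏ j ∈ Finset.range (N + 1), (1 - a * q ^ (j + 1)))
              * (1 - q ^ (N + 1)))) := by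
        refine tsum_congr fun N => ?_
        rw [(hasSumB hqn hq0 hc N).tsum_eq]
        have hprod : qD a q 1 (N + 2)
            = ∏ j ∈ Finset.range (N + 1), (1 - a * q ^ (j + 1)) := by
          rw [qD, Finset.prod_Ico_eq_prod_range]
          refine Finset.prod_congr rfl fun j _ => by rw [add_comm 1 j]
        rw [hprod, neg_pow]
        ring
    _ = - ∑' n : ℕ, q ^ ((n + 1) * (n + 2) / 2) * (-a) ^ (n + 1)
          / ((∏ j ∈ Finset.range (n + 1), (1 - a * q ^ (j + 1)))
              * (1 - q ^ (n + 1))) := tsum_neg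
end

section
/- For $|q|<1$ and complex $a$ with $aq^n \neq 1$ for all $n \geq 1$: $\sum_{n=1}^{\infty} \frac{a q^n}{1-aq^n} = \frac{-1}{(aq;q)_\infty} \sum_{n=1}^{\infty} \frac{n(-a)^n q^{n(n+1)/2}}{(q;q)_n}$, where $(aq;q)_\infty = \prod_{j=1}^{\infty}(1-aq^j)$ and $(q;q)_n = \prod_{j=1}^{n}(1-q^j)$. -/
open Filter Finset Topology

noncomputable def Eq' (q : ℂ) (N : ℕ) : ℂ := ∏ j ∈ Finset.range N, (1 - q ^ (j + 1))

noncomputable def cc (q : ℂ) (N n : ℕ) : ℂ :=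
  if n ≤ N then Eq' q N / (Eq' q n * Eq' q (N - n)) else 0

lemma tri (n : ℕ) : (n + 1) * (n + 2) / 2 = n * (n + 1) / 2 + (n + 1) := by
  obtain ⟨k, hk⟩ := Nat.even_mul_succ_self n
  have h1 : (n + 1) * (n + 2) = 2 * (k + (n + 1)) := by
    rw [show (n + 1) * (n + 2) = n * (n + 1) + 2 * (n + 1) by ring, hk]; ring
  have h2 : n * (n + 1) = 2 * k := by rw [hk]; ring
  rw [h1, h2, Nat.mul_div_cancel_left _ (by norm_num), Nat.mul_div_cancel_left _ (by norm_num)]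

section fixedq
variable {q : ℂ} (h1 : ∀ j : ℕ, 1 - q ^ (j + 1) ≠ 0)

include h1

lemma Eq'_ne_zero (N : ℕ) : Eq' q N ≠ 0 :=
  Finset.prod_ne_zero_iff.mpr fun j _ => h1 j

omit h1 in
lemma Eq'_succ (N : ℕ) : Eq' q (N + 1) = Eq' q N * (1 - q ^ (N + 1)) :=
  Finset.prod_range_succ _ _

lemma cc_eq_prod (m n : ℕ) :
    cc q (n + m) n = (∏ j ∈ Finset.range n, (1 - q ^ (m + j + 1))) / Eq' q n := by
  unfold cc
  rw [if_pos (Nat.le_add_right n m), Nat.add_sub_cancel_left]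
  have hEm : Eq' q (n + m) = Eq' q m * ∏ j ∈ Finset.range n, (1 - q ^ (m + j + 1)) := by
    rw [add_comm n m]
    unfold Eq'
    rw [Finset.prod_range_add]
  rw [hEm]
  field_simp [Eq'_ne_zero h1]

lemma pascal (N n : ℕ) :
    cc q (N + 1) (n + 1) = cc q N (n + 1) + q ^ (N - n) * cc q N n := by
  rcases lt_trichotomy n N with h | rfl | h
  · obtain ⟨m, rfl⟩ : ∃ m, N = n + 1 + m := ⟨N - n - 1, by omega⟩
    unfold cc
    rw [if_pos (by omega), if_pos (by omega), if_pos (by omega)]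
    rw [show n + 1 + m + 1 - (n + 1) = m + 1 by omega,
        show n + 1 + m - (n + 1) = m by omega,
        show n + 1 + m - n = m + 1 by omega]
    have e1 : Eq' q (n + 1 + m + 1) = Eq' q (n + 1 + m) * (1 - q ^ (n + 1 + m + 1)) :=
      Eq'_succ _
    have e2 : Eq' q (n + 1) = Eq' q n * (1 - q ^ (n + 1)) := Eq'_succ _
    have e3 : Eq' q (m + 1) = Eq' q m * (1 - q ^ (m + 1)) := Eq'_succ _
    have hpow : q ^ (m + 1) * q ^ (n + 1) = q ^ (n + 1 + m + 1) := by
      rw [← pow_add]; ring_nf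
    have hkey : (1 - q ^ (n + 1 + m + 1)) = (1 - q ^ (m + 1)) + q ^ (m + 1) * (1 - q ^ (n + 1)) := by
      linear_combination hpow
    rw [e1, e2, e3, hkey]
    field_simp [Eq'_ne_zero h1, h1 n, h1 m]
  · unfold cc
    rw [if_pos le_rfl, if_neg (by omega), if_pos le_rfl]
    simp only [Nat.sub_self, pow_zero, one_mul, zero_add]
    have : Eq' q 0 = 1 := rfl
    rw [this, mul_one, mul_one, div_self (Eq'_ne_zero h1 _), div_self (Eq'_ne_zero h1 _)]
  · unfold cc
    rw [if_neg (by omega), if_neg (by omega), if_neg (by omega)]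
    simp

lemma gbin (A : ℂ) : ∀ N : ℕ, ∏ j ∈ Finset.range N, (1 - A * q ^ (j + 1))
    = ∑ n ∈ Finset.range (N + 1), (-A) ^ n * q ^ (n * (n + 1) / 2) * cc q N n := by
  intro N
  induction N with
  | zero =>
    simp [cc, Eq']
  | succ N ih =>
    rw [Finset.prod_range_succ, ih]
    have hcc0 : cc q (N + 1) 0 = 1 := by
      unfold cc
      rw [if_pos (by omega), Nat.sub_zero]
      have : Eq' q 0 = 1 := rfl
      rw [this, one_mul, div_self (Eq'_ne_zero h1 _)]
    rw [Finset.sum_range_succ' (fun n => (-A) ^ n * q ^ (n * (n + 1) / 2) * cc q (N + 1) n) (N + 1)]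
    simp only [pow_zero, one_mul, hcc0, mul_one, Nat.zero_mul, Nat.zero_div]
    have hsplit : ∀ n ∈ Finset.range (N + 1),
        (-A) ^ (n + 1) * q ^ ((n + 1) * (n + 1 + 1) / 2) * cc q (N + 1) (n + 1)
        = (-A) ^ (n + 1) * q ^ ((n + 1) * (n + 1 + 1) / 2) * cc q N (n + 1)
          + (-A * q ^ (N + 1)) * ((-A) ^ n * q ^ (n * (n + 1) / 2) * cc q N n) := by
      intro n hn
      rw [Finset.mem_range] at hn
      rw [pascal h1]
      have hexp : (n + 1) * (n + 1 + 1) / 2 + (N - n) = n * (n + 1) / 2 + (N + 1) := by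
        rw [show (n + 1) * (n + 1 + 1) = (n + 1) * (n + 2) from rfl, tri]; omega
      have hq2 : q ^ ((n + 1) * (n + 1 + 1) / 2) * q ^ (N - n) = q ^ (n * (n + 1) / 2) * q ^ (N + 1) := by
        rw [← pow_add, ← pow_add, hexp]
      rw [mul_add]
      congr 1
      calc (-A) ^ (n + 1) * q ^ ((n + 1) * (n + 1 + 1) / 2) * (q ^ (N - n) * cc q N n)
          = ((-A) ^ (n + 1) * cc q N n) * (q ^ ((n + 1) * (n + 1 + 1) / 2) * q ^ (N - n)) := by
            ring
        _ = ((-A) ^ (n + 1) * cc q N n) * (q ^ (n * (n + 1) / 2) * q ^ (N + 1)) := by rw [hq2]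
        _ = (-A * q ^ (N + 1)) * ((-A) ^ n * q ^ (n * (n + 1) / 2) * cc q N n) := by ring
    rw [Finset.sum_congr rfl hsplit, Finset.sum_add_distrib, ← Finset.mul_sum]
    have hreassemble : (∑ n ∈ Finset.range (N + 1),
        (-A) ^ (n + 1) * q ^ ((n + 1) * (n + 1 + 1) / 2) * cc q N (n + 1)) + 1
        = ∑ n ∈ Finset.range (N + 1), (-A) ^ n * q ^ (n * (n + 1) / 2) * cc q N n := by
      have h3 : ∑ n ∈ Finset.range (N + 2), (-A) ^ n * q ^ (n * (n + 1) / 2) * cc q N n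
          = ∑ n ∈ Finset.range (N + 1), (-A) ^ n * q ^ (n * (n + 1) / 2) * cc q N n := by
        rw [Finset.sum_range_succ]
        have : cc q N (N + 1) = 0 := by unfold cc; rw [if_neg (by omega)]
        rw [this, mul_zero, add_zero]
      rw [← h3,
        Finset.sum_range_succ' (fun n => (-A) ^ n * q ^ (n * (n + 1) / 2) * cc q N n) (N + 1)]
      have hcc00 : cc q N 0 = 1 := by
        unfold cc
        rw [if_pos (by omega), Nat.sub_zero]
        have : Eq' q 0 = 1 := rfl
        rw [this, one_mul, div_self (Eq'_ne_zero h1 _)]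
      simp only [pow_zero, one_mul, hcc00, mul_one, Nat.zero_mul, Nat.zero_div]
    rw [← hreassemble]
    ring

lemma finid (A : ℂ) (hA : ∀ j : ℕ, 1 - A * q ^ (j + 1) ≠ 0) :
    ∀ N : ℕ, (∑ j ∈ Finset.range N, A * q ^ (j + 1) / (1 - A * q ^ (j + 1)))
        * ∏ j ∈ Finset.range N, (1 - A * q ^ (j + 1))
      = -∑ n ∈ Finset.range (N + 1), (n : ℂ) * (-A) ^ n * q ^ (n * (n + 1) / 2) * cc q N n := by
  intro N
  induction N with
  | zero =>
    simp [cc, Eq']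
  | succ N ih =>
    have hy : A * q ^ (N + 1) / (1 - A * q ^ (N + 1)) * (1 - A * q ^ (N + 1)) = A * q ^ (N + 1) :=
      div_mul_cancel₀ _ (hA N)
    rw [Finset.prod_range_succ, Finset.sum_range_succ]
    have key1 : (∑ j ∈ Finset.range N, A * q ^ (j + 1) / (1 - A * q ^ (j + 1))
          + A * q ^ (N + 1) / (1 - A * q ^ (N + 1)))
          * ((∏ j ∈ Finset.range N, (1 - A * q ^ (j + 1))) * (1 - A * q ^ (N + 1)))
        = ((∑ j ∈ Finset.range N, A * q ^ (j + 1) / (1 - A * q ^ (j + 1)))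
            * ∏ j ∈ Finset.range N, (1 - A * q ^ (j + 1))) * (1 - A * q ^ (N + 1))
          + (A * q ^ (N + 1)) * ∏ j ∈ Finset.range N, (1 - A * q ^ (j + 1)) := by
      calc _ = ((∑ j ∈ Finset.range N, A * q ^ (j + 1) / (1 - A * q ^ (j + 1)))
            * ∏ j ∈ Finset.range N, (1 - A * q ^ (j + 1))) * (1 - A * q ^ (N + 1))
          + (A * q ^ (N + 1) / (1 - A * q ^ (N + 1)) * (1 - A * q ^ (N + 1)))
            * ∏ j ∈ Finset.range N, (1 - A * q ^ (j + 1)) := by ring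
        _ = _ := by rw [hy]
    rw [key1, ih, gbin h1 A N]
    have hRHS : ∑ n ∈ Finset.range (N + 2), (n : ℂ) * (-A) ^ n * q ^ (n * (n + 1) / 2) * cc q (N + 1) n
        = (∑ n ∈ Finset.range (N + 1), (n : ℂ) * (-A) ^ n * q ^ (n * (n + 1) / 2) * cc q N n)
          + (-A * q ^ (N + 1)) * ((∑ n ∈ Finset.range (N + 1), (n : ℂ) * (-A) ^ n * q ^ (n * (n + 1) / 2) * cc q N n)
              + ∑ n ∈ Finset.range (N + 1), (-A) ^ n * q ^ (n * (n + 1) / 2) * cc q N n) := by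
      rw [Finset.sum_range_succ'
        (fun n => (n : ℂ) * (-A) ^ n * q ^ (n * (n + 1) / 2) * cc q (N + 1) n) (N + 1)]
      simp only [Nat.cast_zero, zero_mul, add_zero]
      have hsplit : ∀ n ∈ Finset.range (N + 1),
          ((n : ℂ) + 1) * (-A) ^ (n + 1) * q ^ ((n + 1) * (n + 1 + 1) / 2) * cc q (N + 1) (n + 1)
          = ((n : ℂ) + 1) * (-A) ^ (n + 1) * q ^ ((n + 1) * (n + 1 + 1) / 2) * cc q N (n + 1)
            + (-A * q ^ (N + 1)) * (((n : ℂ) + 1) * ((-A) ^ n * q ^ (n * (n + 1) / 2) * cc q N n)) := by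
        intro n hn
        rw [Finset.mem_range] at hn
        rw [pascal h1]
        have hexp : (n + 1) * (n + 1 + 1) / 2 + (N - n) = n * (n + 1) / 2 + (N + 1) := by
          rw [show (n + 1) * (n + 1 + 1) = (n + 1) * (n + 2) from rfl, tri]; omega
        have hq2 : q ^ ((n + 1) * (n + 1 + 1) / 2) * q ^ (N - n)
            = q ^ (n * (n + 1) / 2) * q ^ (N + 1) := by
          rw [← pow_add, ← pow_add, hexp]
        rw [mul_add]
        congr 1
        calc ((n : ℂ) + 1) * (-A) ^ (n + 1) * q ^ ((n + 1) * (n + 1 + 1) / 2) * (q ^ (N - n) * cc q N n)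
            = (((n : ℂ) + 1) * (-A) ^ (n + 1) * cc q N n)
              * (q ^ ((n + 1) * (n + 1 + 1) / 2) * q ^ (N - n)) := by ring
          _ = (((n : ℂ) + 1) * (-A) ^ (n + 1) * cc q N n)
              * (q ^ (n * (n + 1) / 2) * q ^ (N + 1)) := by rw [hq2]
          _ = (-A * q ^ (N + 1)) * (((n : ℂ) + 1) * ((-A) ^ n * q ^ (n * (n + 1) / 2) * cc q N n)) := by
            ring
      have hcast : ∀ n ∈ Finset.range (N + 1),
          ((n + 1 : ℕ) : ℂ) * (-A) ^ (n + 1) * q ^ ((n + 1) * (n + 1 + 1) / 2) * cc q (N + 1) (n + 1)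
          = ((n : ℂ) + 1) * (-A) ^ (n + 1) * q ^ ((n + 1) * (n + 1 + 1) / 2) * cc q (N + 1) (n + 1) := by
        intro n _; push_cast; ring
      rw [Finset.sum_congr rfl hcast, Finset.sum_congr rfl hsplit, Finset.sum_add_distrib,
        ← Finset.mul_sum]
      congr 1
      · have h3 : ∑ n ∈ Finset.range (N + 2), (n : ℂ) * (-A) ^ n * q ^ (n * (n + 1) / 2) * cc q N n
            = ∑ n ∈ Finset.range (N + 1), (n : ℂ) * (-A) ^ n * q ^ (n * (n + 1) / 2) * cc q N n := by
          rw [Finset.sum_range_succ]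
          have : cc q N (N + 1) = 0 := by unfold cc; rw [if_neg (by omega)]
          rw [this, mul_zero, add_zero]
        rw [← h3, Finset.sum_range_succ'
          (fun n => (n : ℂ) * (-A) ^ n * q ^ (n * (n + 1) / 2) * cc q N n) (N + 1)]
        simp only [Nat.cast_zero, zero_mul, add_zero]
        apply Finset.sum_congr rfl
        intro n _; push_cast; ring
      · congr 1
        have hterm : ∀ n ∈ Finset.range (N + 1),
            ((n : ℂ) + 1) * ((-A) ^ n * q ^ (n * (n + 1) / 2) * cc q N n)
            = (n : ℂ) * (-A) ^ n * q ^ (n * (n + 1) / 2) * cc q N n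
              + (-A) ^ n * q ^ (n * (n + 1) / 2) * cc q N n := by
          intro n _; ring
        rw [Finset.sum_congr rfl hterm, Finset.sum_add_distrib]
    rw [hRHS]
    ring

end fixedq

theorem stmt_11 (a q : ℂ) (hq : ‖q‖ < 1)
    (ha : ∀ n : ℕ, 1 ≤ n → a * q ^ n ≠ 1) :
    ∑' n : ℕ, a * q ^ (n + 1) / (1 - a * q ^ (n + 1))
      = (-1) / (∏' j : ℕ, (1 - a * q ^ (j + 1)))
        * ∑' n : ℕ, (n + 1 : ℂ) * (-a) ^ (n + 1) * q ^ ((n + 1) * (n + 2) / 2)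
            / ∏ j ∈ Finset.range (n + 1), (1 - q ^ (j + 1)) := by
  have hq' : ‖q‖ < 1 := hq
  have hq0 : (0:ℝ) < 1 - ‖q‖ := by linarith
  have h1 : ∀ j : ℕ, 1 - q ^ (j + 1) ≠ 0 := by
    intro j
    apply sub_ne_zero_of_ne
    intro h
    have h2 : ‖q ^ (j + 1)‖ < 1 := by
      rw [norm_pow]
      exact pow_lt_one₀ (norm_nonneg q) hq' (by omega)
    rw [← h] at h2
    simp at h2
  have hA : ∀ j : ℕ, 1 - a * q ^ (j + 1) ≠ 0 := fun j =>
    sub_ne_zero_of_ne (Ne.symm (ha (j + 1) (by omega)))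
  -- geometric summability
  have hgeo : Summable (fun n : ℕ => ‖a * q ^ (n + 1)‖) := by
    have h0 : Summable (fun n : ℕ => (‖a‖ * ‖q‖) * ‖q‖ ^ n) :=
      (summable_geometric_of_lt_one (norm_nonneg q) hq').mul_left _
    refine h0.congr fun n => ?_
    rw [norm_mul, norm_pow, pow_succ]
    ring
  have hsmall : ∀ᶠ n : ℕ in Filter.atTop, ‖a * q ^ (n + 1)‖ ≤ 1 / 2 :=
    hgeo.tendsto_atTop_zero.eventually_le_const (by norm_num)
  -- Summability of the Lambert terms
  have hL : Summable (fun n : ℕ => a * q ^ (n + 1) / (1 - a * q ^ (n + 1))) := by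
    refine Summable.of_norm_bounded_eventually_nat (g := fun n => 2 * ‖a * q ^ (n + 1)‖)
      (hgeo.mul_left 2) ?_
    filter_upwards [hsmall] with n hn
    have hd : (1 : ℝ) / 2 ≤ ‖1 - a * q ^ (n + 1)‖ := by
      have h2 := norm_sub_norm_le (1 : ℂ) (a * q ^ (n + 1))
      rw [norm_one] at h2
      linarith
    rw [norm_div, div_le_iff₀ (lt_of_lt_of_le one_half_pos hd)]
    calc ‖a * q ^ (n + 1)‖ = 2 * ‖a * q ^ (n + 1)‖ * (1 / 2) := by ring
      _ ≤ 2 * ‖a * q ^ (n + 1)‖ * ‖1 - a * q ^ (n + 1)‖ := by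
          apply mul_le_mul_of_nonneg_left hd
          positivity
  -- Summability of logs, multipliable and nonvanishing of the infinite product
  have hlog : Summable (fun j : ℕ => Complex.log (1 - a * q ^ (j + 1))) := by
    refine Summable.of_norm_bounded_eventually_nat (g := fun n => 3 / 2 * ‖a * q ^ (n + 1)‖)
      (hgeo.mul_left _) ?_
    filter_upwards [hsmall] with n hn
    rw [sub_eq_add_neg]
    have := Complex.norm_log_one_add_half_le_self (z := -(a * q ^ (n + 1)))
      (by rwa [norm_neg])
    simpa using this
  have hexp : Complex.exp (∑' j : ℕ, Complex.log (1 - a * q ^ (j + 1)))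
      = ∏' j : ℕ, (1 - a * q ^ (j + 1)) := by
    have := Complex.cexp_tsum_eq_tprod (ι := ℕ)
      (f := fun j => 1 - a * q ^ (j + 1)) hA hlog
    exact this
  have hPne : (∏' j : ℕ, (1 - a * q ^ (j + 1))) ≠ 0 := by
    rw [← hexp]; exact Complex.exp_ne_zero _
  have hMul : Multipliable (fun j : ℕ => 1 - a * q ^ (j + 1)) := by
    have := Complex.multipliable_of_summable_log (ι := ℕ)
      (f := fun j => 1 - a * q ^ (j + 1)) hlog
    exact this
  have htendP : Filter.Tendsto (fun N => ∏ j ∈ Finset.range N, (1 - a * q ^ (j + 1)))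
      Filter.atTop (nhds (∏' j : ℕ, (1 - a * q ^ (j + 1)))) :=
    hMul.hasProd.tendsto_prod_nat
  have htendL : Filter.Tendsto
      (fun N => ∑ j ∈ Finset.range N, a * q ^ (j + 1) / (1 - a * q ^ (j + 1)))
      Filter.atTop (nhds (∑' n : ℕ, a * q ^ (n + 1) / (1 - a * q ^ (n + 1)))) :=
    hL.hasSum.tendsto_sum_nat
  -- the terms of the finite identity, and their limits
  set K : ℝ := 2 / (1 - ‖q‖) with hK
  have hKpos : 0 < K := by positivity
  set B : ℝ := ‖a‖ * K with hB
  have hB0 : 0 ≤ B := by positivity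
  set F : ℕ → ℕ → ℂ := fun N n => (n : ℂ) * (-a) ^ n * q ^ (n * (n + 1) / 2) * cc q N n with hF
  set fi : ℕ → ℂ := fun n => (n : ℂ) * (-a) ^ n * q ^ (n * (n + 1) / 2) / Eq' q n with hfi
  set g : ℕ → ℝ := fun n => (n : ℝ) * B ^ n * ‖q‖ ^ (n * (n + 1) / 2) with hg
  have hgnn : ∀ n, 0 ≤ g n := fun n =>
    mul_nonneg (mul_nonneg (Nat.cast_nonneg n) (pow_nonneg hB0 n))
      (pow_nonneg (norm_nonneg q) _)
  have hEnlb : ∀ n : ℕ, (1 - ‖q‖) ^ n ≤ ‖Eq' q n‖ := by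
    intro n
    rw [Eq', norm_prod]
    rw [show (1 - ‖q‖) ^ n = ∏ _j ∈ Finset.range n, (1 - ‖q‖) by
      rw [Finset.prod_const, Finset.card_range]]
    apply Finset.prod_le_prod (fun _ _ => le_of_lt hq0)
    intro j _
    have h2 := norm_sub_norm_le (1 : ℂ) (q ^ (j + 1))
    rw [norm_one, norm_pow] at h2
    have h3 : ‖q‖ ^ (j + 1) ≤ ‖q‖ := by
      calc ‖q‖ ^ (j + 1) ≤ ‖q‖ ^ 1 :=
            pow_le_pow_of_le_one (norm_nonneg q) hq'.le (by omega)
        _ = ‖q‖ := pow_one _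
    linarith
  have hccb : ∀ N n : ℕ, ‖cc q N n‖ ≤ K ^ n := by
    intro N n
    by_cases h : n ≤ N
    · have hcp := cc_eq_prod h1 (N - n) n
      rw [show n + (N - n) = N by omega] at hcp
      rw [hcp, norm_div]
      have hnum : ‖∏ j ∈ Finset.range n, (1 - q ^ (N - n + j + 1))‖ ≤ 2 ^ n := by
        rw [norm_prod, show (2:ℝ) ^ n = ∏ _j ∈ Finset.range n, (2:ℝ) by
          rw [Finset.prod_const, Finset.card_range]]
        apply Finset.prod_le_prod (fun _ _ => norm_nonneg _)
        intro j _
        calc ‖1 - q ^ (N - n + j + 1)‖ ≤ ‖(1 : ℂ)‖ + ‖q ^ (N - n + j + 1)‖ := norm_sub_le _ _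
          _ ≤ 1 + 1 := by
              rw [norm_one, norm_pow]
              have := pow_le_one₀ (norm_nonneg q) hq'.le (n := N - n + j + 1)
              linarith
          _ = 2 := by norm_num
      have hden : (1 - ‖q‖) ^ n ≤ ‖Eq' q n‖ := hEnlb n
      calc ‖∏ j ∈ Finset.range n, (1 - q ^ (N - n + j + 1))‖ / ‖Eq' q n‖
          ≤ 2 ^ n / (1 - ‖q‖) ^ n := by
            apply div_le_div₀ (by positivity) hnum (by positivity) hden
        _ = K ^ n := by rw [hK, div_pow]
    · have : cc q N n = 0 := by unfold cc; rw [if_neg h]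
      rw [this, norm_zero]
      positivity
  have hbound : ∀ N n : ℕ, ‖F N n‖ ≤ g n := by
    intro N n
    rw [hF]
    simp only
    rw [norm_mul, norm_mul, norm_mul, norm_pow, norm_pow, norm_neg, Complex.norm_natCast]
    calc (n : ℝ) * ‖a‖ ^ n * ‖q‖ ^ (n * (n + 1) / 2) * ‖cc q N n‖
        ≤ (n : ℝ) * ‖a‖ ^ n * ‖q‖ ^ (n * (n + 1) / 2) * K ^ n := by
          apply mul_le_mul_of_nonneg_left (hccb N n)
          positivity
      _ = g n := by rw [hg]; simp only; rw [hB, mul_pow]; ring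
  have hgsum : Summable g := by
    apply summable_of_ratio_norm_eventually_le (r := 1 / 2) (by norm_num)
    have hBq : Filter.Tendsto (fun n : ℕ => B * ‖q‖ ^ (n + 1)) Filter.atTop (nhds 0) := by
      have h0 : Filter.Tendsto (fun n : ℕ => ‖q‖ ^ (n + 1)) Filter.atTop (nhds 0) := by
        have := (tendsto_pow_atTop_nhds_zero_of_lt_one (norm_nonneg q) hq').comp
          (Filter.tendsto_add_atTop_nat 1)
        exact this
      simpa using h0.const_mul B
    have hBsmall : ∀ᶠ n : ℕ in Filter.atTop, B * ‖q‖ ^ (n + 1) ≤ 1 / 8 :=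
      hBq.eventually_le_const (by norm_num)
    filter_upwards [hBsmall, Filter.eventually_ge_atTop 1] with n h8 hn1
    rw [Real.norm_of_nonneg (hgnn _), Real.norm_of_nonneg (hgnn _)]
    have hn1' : (1 : ℝ) ≤ (n : ℝ) := by exact_mod_cast hn1
    have hc : 0 ≤ B ^ n * ‖q‖ ^ (n * (n + 1) / 2) :=
      mul_nonneg (pow_nonneg hB0 n) (pow_nonneg (norm_nonneg q) _)
    have hbqnn : 0 ≤ B * ‖q‖ ^ (n + 1) :=
      mul_nonneg hB0 (pow_nonneg (norm_nonneg q) _)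
    have key : ((n : ℝ) + 1) * (B * ‖q‖ ^ (n + 1)) ≤ (n : ℝ) / 2 := by nlinarith
    have hgsucc : g (n + 1)
        = (((n : ℝ) + 1) * (B * ‖q‖ ^ (n + 1))) * (B ^ n * ‖q‖ ^ (n * (n + 1) / 2)) := by
      rw [hg]
      simp only
      rw [show (n + 1) * (n + 1 + 1) = (n + 1) * (n + 2) from rfl, tri, pow_add, pow_succ]
      push_cast
      ring
    rw [hgsucc]
    calc (((n : ℝ) + 1) * (B * ‖q‖ ^ (n + 1))) * (B ^ n * ‖q‖ ^ (n * (n + 1) / 2))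
        ≤ ((n : ℝ) / 2) * (B ^ n * ‖q‖ ^ (n * (n + 1) / 2)) :=
          mul_le_mul_of_nonneg_right key hc
      _ = 1 / 2 * g n := by rw [hg]; simp only; ring
  -- pointwise limits
  have hpt : ∀ n : ℕ, Filter.Tendsto (fun N => F N n) Filter.atTop (nhds (fi n)) := by
    intro n
    have hprodlim : Filter.Tendsto (fun N => ∏ j ∈ Finset.range n, (1 - q ^ (N - n + j + 1)))
        Filter.atTop (nhds 1) := by
      have hfac : ∀ j ∈ Finset.range n,
          Filter.Tendsto (fun N : ℕ => 1 - q ^ (N - n + j + 1)) Filter.atTop (nhds 1) := by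
        intro j _
        have hexpt : Filter.Tendsto (fun N : ℕ => N - n + j + 1) Filter.atTop Filter.atTop :=
          Filter.tendsto_atTop_mono (fun N => by omega : ∀ N : ℕ, N - n ≤ N - n + j + 1)
            (Filter.tendsto_sub_atTop_nat n)
        have h0 : Filter.Tendsto (fun N : ℕ => q ^ (N - n + j + 1)) Filter.atTop (nhds 0) :=
          (tendsto_pow_atTop_nhds_zero_of_norm_lt_one hq').comp hexpt
        have := h0.const_sub (1 : ℂ)
        simpa using this
      have := tendsto_finset_prod (Finset.range n) hfac
      simpa using this
    have hcct : Filter.Tendsto (fun N => cc q N n) Filter.atTop (nhds (1 / Eq' q n)) := by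
      apply Filter.Tendsto.congr' ?_ (hprodlim.div_const (Eq' q n) |>.congr'
        (Filter.Eventually.of_forall fun N => rfl))
      · filter_upwards [Filter.eventually_ge_atTop n] with N hN
        have hcp := cc_eq_prod h1 (N - n) n
        rw [show n + (N - n) = N by omega] at hcp
        rw [hcp]
    have := hcct.const_mul ((n : ℂ) * (-a) ^ n * q ^ (n * (n + 1) / 2))
    rw [hfi]
    simp only
    rw [div_eq_mul_one_div]
    exact this.congr fun N => by rw [hF]
  have hfb : ∀ n, ‖fi n‖ ≤ g n := fun n =>
    le_of_tendsto (hpt n).norm (Filter.Eventually.of_forall fun N => hbound N n)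
  have hSsum : Summable fi := Summable.of_norm_bounded hgsum hfb
  have htendS : Filter.Tendsto (fun N => ∑' n, F N n) Filter.atTop (nhds (∑' n, fi n)) :=
    tendsto_tsum_of_dominated_convergence hgsum hpt
      (Filter.Eventually.of_forall fun N n => hbound N n)
  have hfin : ∀ N, (∑' n, F N n) = ∑ n ∈ Finset.range (N + 1), F N n := by
    intro N
    apply tsum_eq_sum
    intro n hn
    rw [Finset.mem_range, not_lt] at hn
    rw [hF]
    simp only
    have : cc q N n = 0 := by unfold cc; rw [if_neg (by omega)]
    rw [this, mul_zero]
  -- main identity in the limit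
  have hmain : (∑' n : ℕ, a * q ^ (n + 1) / (1 - a * q ^ (n + 1)))
      * (∏' j : ℕ, (1 - a * q ^ (j + 1))) = -(∑' n, fi n) := by
    have heq : (fun N => (∑ j ∈ Finset.range N, a * q ^ (j + 1) / (1 - a * q ^ (j + 1)))
        * ∏ j ∈ Finset.range N, (1 - a * q ^ (j + 1))) = fun N => -(∑' n, F N n) := by
      funext N
      rw [finid h1 a hA N, hfin N]
    have hLn := htendL.mul htendP
    rw [heq] at hLn
    exact tendsto_nhds_unique hLn htendS.neg
  -- shift the sum
  have hshift : (∑' n, fi n) = ∑' n : ℕ, (n + 1 : ℂ) * (-a) ^ (n + 1) * q ^ ((n + 1) * (n + 2) / 2)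
      / ∏ j ∈ Finset.range (n + 1), (1 - q ^ (j + 1)) := by
    rw [Summable.tsum_eq_zero_add hSsum]
    have hfi0 : fi 0 = 0 := by rw [hfi]; simp
    rw [hfi0, zero_add]
    apply tsum_congr
    intro n
    rw [hfi]
    simp only [Eq']
    push_cast
    ring_nf
  calc (∑' n : ℕ, a * q ^ (n + 1) / (1 - a * q ^ (n + 1)))
      = (∑' n : ℕ, a * q ^ (n + 1) / (1 - a * q ^ (n + 1)))
        * (∏' j : ℕ, (1 - a * q ^ (j + 1))) / (∏' j : ℕ, (1 - a * q ^ (j + 1))) :=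
        (mul_div_cancel_right₀ _ hPne).symm
    _ = -(∑' n, fi n) / (∏' j : ℕ, (1 - a * q ^ (j + 1))) := by rw [hmain]
    _ = _ := by rw [hshift]; ring
end
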